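/- arXiv:1409.4321 — 5 statements merged into one kernel-verified Lean document; each statement's English description precedes it below -/
import Mathlib

section
/- Let K ⊆ ℝ^m be a nonempty compact set and let G_0, G_1, …, G_p : K → ℝ^{n×n} be continuous maps taking values in the symmetric matrices. Define G(x, δ) = G_0(δ) + Σ_{i=1}^p x_i G_i(δ) for x ∈ ℝ^p, δ ∈ K. If for every δ ∈ K there exists x(δ) ∈ ℝ^p such that G(x(δ), δ) is positive definite, then there exist real polynomial functions x_1^*, …, x_p^* in the m real variables δ_1, …, δ_m such that for every δ ∈ K the matrix G(x^*(δ), δ) is positive definite, where x^*(δ) = (x_1^*(δ), …, x_p^*(δ)). -/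
open Matrix

section Helpers

lemma myDot_self_nonneg {n : ℕ} (v : Fin n → ℝ) : 0 ≤ v ⬝ᵥ v :=
  Finset.sum_nonneg fun _ _ => mul_self_nonneg _

lemma mySum_mulVec {n N : ℕ} (A : Fin N → Matrix (Fin n) (Fin n) ℝ) (v : Fin n → ℝ) :
    (∑ i, A i) *ᵥ v = ∑ i, A i *ᵥ v :=
  map_sum (Matrix.mulVec.addMonoidHomLeft v) A Finset.univ

lemma myDot_sum {n N : ℕ} (v : Fin n → ℝ) (w : Fin N → Fin n → ℝ) :
    v ⬝ᵥ (∑ i, w i) = ∑ i, v ⬝ᵥ w i := by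
  simp [dotProduct, Finset.mul_sum]
  exact Finset.sum_comm

lemma quad_expand {n p : ℕ} (G0 : Matrix (Fin n) (Fin n) ℝ)
    (G : Fin p → Matrix (Fin n) (Fin n) ℝ) (c : Fin p → ℝ) (v : Fin n → ℝ) :
    v ⬝ᵥ (G0 + ∑ i, c i • G i) *ᵥ v
      = v ⬝ᵥ G0 *ᵥ v + ∑ i, c i * (v ⬝ᵥ G i *ᵥ v) := by
  rw [Matrix.add_mulVec, dotProduct_add, mySum_mulVec, myDot_sum]
  congr 1
  refine Finset.sum_congr rfl fun i _ => ?_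
  rw [Matrix.smul_mulVec, dotProduct_smul, smul_eq_mul]

lemma quad_abs_le {n : ℕ} (A : Matrix (Fin n) (Fin n) ℝ) (v : Fin n → ℝ) :
    |v ⬝ᵥ A *ᵥ v| ≤ (∑ a, ∑ b, |A a b|) * (v ⬝ᵥ v) := by
  have hsq : ∀ a, v a * v a ≤ v ⬝ᵥ v := fun a =>
    Finset.single_le_sum (fun i _ => mul_self_nonneg (v i)) (Finset.mem_univ a)
  have hvv : ∀ a b, |v a| * |v b| ≤ v ⬝ᵥ v := by
    intro a b
    nlinarith [hsq a, hsq b, abs_nonneg (v a), abs_nonneg (v b), sq_abs (v a), sq_abs (v b),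
      sq_nonneg (|v a| - |v b|)]
  calc |v ⬝ᵥ A *ᵥ v| = |∑ a, ∑ b, v a * (A a b * v b)| := by
        simp [dotProduct, Matrix.mulVec, Finset.mul_sum]
    _ ≤ ∑ a, ∑ b, |v a * (A a b * v b)| := by
        refine (Finset.abs_sum_le_sum_abs _ _).trans (Finset.sum_le_sum fun a _ => ?_)
        exact Finset.abs_sum_le_sum_abs _ _
    _ ≤ ∑ a, ∑ b, |A a b| * (v ⬝ᵥ v) := by
        refine Finset.sum_le_sum fun a _ => Finset.sum_le_sum fun b _ => ?_
        rw [abs_mul, abs_mul]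
        calc |v a| * (|A a b| * |v b|) = |A a b| * (|v a| * |v b|) := by ring
          _ ≤ |A a b| * (v ⬝ᵥ v) := mul_le_mul_of_nonneg_left (hvv a b) (abs_nonneg _)
    _ = (∑ a, ∑ b, |A a b|) * (v ⬝ᵥ v) := by
        rw [Finset.sum_mul]; exact Finset.sum_congr rfl fun a _ => (Finset.sum_mul _ _ _).symm

lemma exists_unit {n : ℕ} {v : Fin n → ℝ} (hv : v ≠ 0) :
    ∃ w : Fin n → ℝ, w ⬝ᵥ w = 1 ∧
      ∀ M : Matrix (Fin n) (Fin n) ℝ, v ⬝ᵥ M *ᵥ v = (v ⬝ᵥ v) * (w ⬝ᵥ M *ᵥ w) := by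
  have hpos : 0 < v ⬝ᵥ v :=
    lt_of_le_of_ne (myDot_self_nonneg v) (fun h => hv (dotProduct_self_eq_zero.mp h.symm))
  set r := Real.sqrt (v ⬝ᵥ v) with hr
  have hrpos : 0 < r := Real.sqrt_pos.mpr hpos
  have hr2 : r * r = v ⬝ᵥ v := Real.mul_self_sqrt hpos.le
  refine ⟨r⁻¹ • v, ?_, ?_⟩
  · rw [smul_dotProduct, dotProduct_smul, smul_eq_mul, smul_eq_mul]
    field_simp
    nlinarith
  · intro M
    rw [Matrix.mulVec_smul, dotProduct_smul, smul_dotProduct,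
      smul_eq_mul, smul_eq_mul]
    field_simp
    rw [← hr2]; ring

lemma quadContOn {n m : ℕ} {K : Set (Fin m → ℝ)} {M : (Fin m → ℝ) → Matrix (Fin n) (Fin n) ℝ}
    (hM : ContinuousOn M K) :
    ContinuousOn (fun z : (Fin m → ℝ) × (Fin n → ℝ) => z.2 ⬝ᵥ (M z.1) *ᵥ z.2)
      (K ×ˢ (Set.univ : Set (Fin n → ℝ))) := by
  have hMe : ∀ a b, ContinuousOn (fun z : (Fin m → ℝ) × (Fin n → ℝ) => M z.1 a b)
      (K ×ˢ (Set.univ : Set (Fin n → ℝ))) := by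
    intro a b
    have h1 : ContinuousOn (fun z : (Fin m → ℝ) × (Fin n → ℝ) => M z.1)
        (K ×ˢ (Set.univ : Set (Fin n → ℝ))) :=
      hM.comp continuous_fst.continuousOn (fun z hz => hz.1)
    exact (continuous_id.matrix_elem a b).comp_continuousOn h1
  have hv : ∀ a, Continuous (fun z : (Fin m → ℝ) × (Fin n → ℝ) => z.2 a) :=
    fun a => (continuous_apply a).comp continuous_snd
  simp only [dotProduct, Matrix.mulVec]
  exact continuousOn_finset_sum _ fun a _ =>
    ((hv a).continuousOn).mul <|
      continuousOn_finset_sum _ fun b _ => (hMe a b).mul ((hv b).continuousOn)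

lemma entryAbsContOn {n m : ℕ} {K : Set (Fin m → ℝ)} {M : (Fin m → ℝ) → Matrix (Fin n) (Fin n) ℝ}
    (hM : ContinuousOn M K) :
    ContinuousOn (fun δ => ∑ a, ∑ b, |M δ a b|) K :=
  continuousOn_finset_sum _ fun a _ => continuousOn_finset_sum _ fun b _ =>
    ((continuous_id.matrix_elem a b).comp_continuousOn hM).abs

lemma sphere_compact {n : ℕ} : IsCompact {v : Fin n → ℝ | v ⬝ᵥ v = 1} := by
  have hc : Continuous fun v : Fin n → ℝ => v ⬝ᵥ v :=
    continuous_finset_sum _ fun i _ => (continuous_apply i).mul (continuous_apply i)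
  have hclosed : IsClosed {v : Fin n → ℝ | v ⬝ᵥ v = 1} :=
    isClosed_singleton.preimage hc
  refine (isCompact_closedBall (0 : Fin n → ℝ) 1).of_isClosed_subset hclosed ?_
  intro v hv
  simp only [Metric.mem_closedBall, dist_zero_right]
  rw [pi_norm_le_iff_of_nonneg zero_le_one]
  intro i
  rw [Real.norm_eq_abs, abs_le_one_iff_mul_self_le_one]
  calc v i * v i ≤ v ⬝ᵥ v :=
        Finset.single_le_sum (fun j _ => mul_self_nonneg (v j)) (Finset.mem_univ i)
    _ = 1 := hv

lemma unit_ne_zero {n : ℕ} {v : Fin n → ℝ} (hv : v ⬝ᵥ v = 1) : v ≠ 0 := by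
  intro h
  rw [h] at hv
  simp [dotProduct] at hv


lemma quadCont {n : ℕ} (M : Matrix (Fin n) (Fin n) ℝ) :
    Continuous fun v : Fin n → ℝ => v ⬝ᵥ M *ᵥ v := by
  simp only [dotProduct, Matrix.mulVec]
  exact continuous_finset_sum _ fun a _ => (continuous_apply a).mul
    (continuous_finset_sum _ fun b _ => continuous_const.mul (continuous_apply b))

lemma sphere_nonempty {n : ℕ} (hn : 0 < n) :
    ({v : Fin n → ℝ | v ⬝ᵥ v = 1}).Nonempty :=
  ⟨Pi.single ⟨0, hn⟩ 1, by simp [dotProduct, Pi.single_apply]⟩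

lemma coercive_of_posdef {n : ℕ} (hn : 0 < n) {M : Matrix (Fin n) (Fin n) ℝ}
    (h : ∀ v : Fin n → ℝ, v ≠ 0 → 0 < v ⬝ᵥ M *ᵥ v) :
    ∃ c > 0, ∀ v : Fin n → ℝ, c * (v ⬝ᵥ v) ≤ v ⬝ᵥ M *ᵥ v := by
  obtain ⟨w0, hw0, hmin⟩ :=
    sphere_compact.exists_isMinOn (sphere_nonempty hn) (quadCont M).continuousOn
  refine ⟨w0 ⬝ᵥ M *ᵥ w0, h w0 (unit_ne_zero hw0), ?_⟩
  intro v
  by_cases hv : v = 0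
  · subst hv; simp
  · obtain ⟨w, hw, hscale⟩ := exists_unit hv
    rw [hscale M]
    have hle : w0 ⬝ᵥ M *ᵥ w0 ≤ w ⬝ᵥ M *ᵥ w := hmin hw
    have hvv := myDot_self_nonneg v
    nlinarith

end Helpers

/-- Bliman's theorem: if the real-parameter-dependent LMI
`G(x, δ) = G₀(δ) + ∑ xᵢ Gᵢ(δ) > 0` has a solution for every `δ` in a nonempty
compact set `K ⊆ ℝ^m`, then it has a solution depending polynomially on `δ`. -/
theorem stmt0 (m n p : ℕ) (hm : 0 < m) (hn : 0 < n) (hp : 0 < p)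
    (K : Set (Fin m → ℝ)) (hK : IsCompact K) (hKne : K.Nonempty)
    (G0 : (Fin m → ℝ) → Matrix (Fin n) (Fin n) ℝ)
    (G : Fin p → (Fin m → ℝ) → Matrix (Fin n) (Fin n) ℝ)
    (hG0c : ContinuousOn G0 K) (hGc : ∀ i, ContinuousOn (G i) K)
    (hG0s : ∀ δ ∈ K, (G0 δ).IsSymm) (hGs : ∀ i, ∀ δ ∈ K, (G i δ).IsSymm)
    (hfeas : ∀ δ ∈ K, ∃ x : Fin p → ℝ, (G0 δ + ∑ i, x i • G i δ).PosDef) :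
    ∃ xstar : Fin p → MvPolynomial (Fin m) ℝ,
      ∀ δ ∈ K,
        (G0 δ + ∑ i, (MvPolynomial.eval δ (xstar i)) • G i δ).PosDef := by
  classical
  -- quadratic form positivity from PosDef over ℝ
  have hPD : ∀ δ ∈ K, ∀ x : Fin p → ℝ, (G0 δ + ∑ i, x i • G i δ).PosDef →
      ∀ v : Fin n → ℝ, v ≠ 0 → 0 < v ⬝ᵥ (G0 δ + ∑ i, x i • G i δ) *ᵥ v := by
    intro δ hδ x hx v hv
    have := hx.dotProduct_mulVec_pos hv
    simpa using this
  choose xsel hxsel using hfeas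
  -- step 1: relatively open neighborhoods on which a fixed x works
  have hstep1 : ∀ δ0 : (Fin m → ℝ), ∀ h0 : δ0 ∈ K, ∃ U : Set (Fin m → ℝ),
      IsOpen U ∧ δ0 ∈ U ∧ Uᶜ.Nonempty ∧
      ∀ δ ∈ U ∩ K, ∀ v : Fin n → ℝ, v ≠ 0 →
        0 < v ⬝ᵥ (G0 δ + ∑ i, xsel δ0 h0 i • G i δ) *ᵥ v := by
    intro δ0 h0
    have hpd := hPD δ0 h0 (xsel δ0 h0) (hxsel δ0 h0)
    obtain ⟨c0, hc0, hcoer0⟩ := coercive_of_posdef hn hpd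
    have hMcont : ContinuousOn (fun δ => G0 δ + ∑ i, xsel δ0 h0 i • G i δ) K :=
      hG0c.add (continuousOn_finset_sum _ fun i _ => (hGc i).const_smul (xsel δ0 h0 i))
    set e : (Fin m → ℝ) → ℝ := fun δ =>
      ∑ a, ∑ b, |((G0 δ + ∑ i, xsel δ0 h0 i • G i δ)
        - (G0 δ0 + ∑ i, xsel δ0 h0 i • G i δ0)) a b| with hedef
    have hecont : ContinuousOn e K := entryAbsContOn (hMcont.sub continuousOn_const)
    have he0 : e δ0 = 0 := by simp [hedef]
    have htend : Filter.Tendsto e (nhdsWithin δ0 K) (nhds 0) := by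
      have := hecont δ0 h0
      rwa [ContinuousWithinAt, he0] at this
    have hev : ∀ᶠ δ in nhdsWithin δ0 K, e δ < c0 := htend.eventually_lt_const hc0
    obtain ⟨U', hU'open, hδ0U', hsub⟩ := mem_nhdsWithin.mp hev
    set z : Fin m → ℝ := fun k => δ0 k + 2 with hz
    refine ⟨U' ∩ Metric.ball δ0 1, hU'open.inter Metric.isOpen_ball,
      ⟨hδ0U', Metric.mem_ball_self one_pos⟩, ⟨z, ?_⟩, ?_⟩
    · intro hmem
      have hball := hmem.2
      rw [Metric.mem_ball] at hball
      have h1 := dist_le_pi_dist z δ0 ⟨0, hm⟩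
      have h2 : dist (z (⟨0, hm⟩ : Fin m)) (δ0 ⟨0, hm⟩) = 2 := by
        rw [hz, Real.dist_eq]; norm_num
      rw [h2] at h1
      linarith
    · intro δ hδ v hv
      have he : e δ < c0 := hsub ⟨hδ.1.1, hδ.2⟩
      have hlow := hcoer0 v
      have hdiffbound := quad_abs_le ((G0 δ + ∑ i, xsel δ0 h0 i • G i δ)
        - (G0 δ0 + ∑ i, xsel δ0 h0 i • G i δ0)) v
      simp only [hedef] at he
      have hident : v ⬝ᵥ ((G0 δ + ∑ i, xsel δ0 h0 i • G i δ)
          - (G0 δ0 + ∑ i, xsel δ0 h0 i • G i δ0)) *ᵥ v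
          = v ⬝ᵥ (G0 δ + ∑ i, xsel δ0 h0 i • G i δ) *ᵥ v
            - v ⬝ᵥ (G0 δ0 + ∑ i, xsel δ0 h0 i • G i δ0) *ᵥ v := by
        rw [Matrix.sub_mulVec, dotProduct_sub]
      have hvv : 0 < v ⬝ᵥ v :=
        lt_of_le_of_ne (myDot_self_nonneg v) (fun h => hv (dotProduct_self_eq_zero.mp h.symm))
      have habs := abs_le.mp hdiffbound
      nlinarith [mul_pos (sub_pos.mpr he) hvv, habs.1, habs.2]
  choose U hUopen hUmem hUcne hUpos using hstep1
  -- step 2: finite subcover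
  have hcover : K ⊆ ⋃ j : K, U j.1 j.2 := fun δ hδ =>
    Set.mem_iUnion.mpr ⟨⟨δ, hδ⟩, hUmem δ hδ⟩
  obtain ⟨t, ht⟩ := hK.elim_finite_subcover (fun j : K => U j.1 j.2)
    (fun j => hUopen j.1 j.2) hcover
  -- partition of unity
  set φ : K → (Fin m → ℝ) → ℝ := fun j δ => Metric.infDist δ (U j.1 j.2)ᶜ with hφ
  have hφcont : ∀ j : K, Continuous (φ j) := fun j => Metric.continuous_infDist_pt _
  have hφnonneg : ∀ j δ, 0 ≤ φ j δ := fun j δ => Metric.infDist_nonneg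
  have hφpos : ∀ (j : K) (δ), δ ∈ U j.1 j.2 → 0 < φ j δ := by
    intro j δ hδ
    exact ((hUopen j.1 j.2).isClosed_compl.notMem_iff_infDist_pos (hUcne j.1 j.2)).mp
      (by simpa using hδ)
  have hφsupp : ∀ (j : K) (δ), 0 < φ j δ → δ ∈ U j.1 j.2 := by
    intro j δ hδ
    by_contra h
    rw [hφ] at hδ
    simp only at hδ
    rw [Metric.infDist_zero_of_mem (by simpa using h)] at hδ
    exact lt_irrefl _ hδ
  set σ : (Fin m → ℝ) → ℝ := fun δ => ∑ j ∈ t, φ j δ with hσ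
  have hσcont : Continuous σ := continuous_finset_sum _ fun j _ => hφcont j
  have hσpos : ∀ δ ∈ K, 0 < σ δ := by
    intro δ hδ
    obtain ⟨j, hjt, hjU⟩ := Set.mem_iUnion₂.mp (ht hδ)
    exact Finset.sum_pos' (fun k _ => hφnonneg k δ) ⟨j, hjt, hφpos j δ hjU⟩
  -- the continuous selection
  set u : Fin p → (Fin m → ℝ) → ℝ :=
    fun i δ => (∑ j ∈ t, φ j δ * xsel j.1 j.2 i) / σ δ with hu
  have hucont : ∀ i, ContinuousOn (u i) K := by
    intro i
    exact ContinuousOn.div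
      (continuous_finset_sum _ fun j _ => (hφcont j).mul continuous_const).continuousOn
      hσcont.continuousOn (fun δ hδ => (hσpos δ hδ).ne')
  -- feasibility of the selection (at the quadratic form level)
  have hufeas : ∀ δ ∈ K, ∀ v : Fin n → ℝ, v ≠ 0 →
      0 < v ⬝ᵥ (G0 δ + ∑ i, u i δ • G i δ) *ᵥ v := by
    intro δ hδ v hv
    rw [quad_expand]
    have hσδ := hσpos δ hδ
    have hkey : σ δ * (v ⬝ᵥ G0 δ *ᵥ v + ∑ i, u i δ * (v ⬝ᵥ G i δ *ᵥ v))
        = ∑ j ∈ t, φ j δ * (v ⬝ᵥ G0 δ *ᵥ v + ∑ i, xsel j.1 j.2 i * (v ⬝ᵥ G i δ *ᵥ v)) := by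
      have hσu : ∀ i, σ δ * u i δ = ∑ j ∈ t, φ j δ * xsel j.1 j.2 i := by
        intro i
        simp only [hu]
        rw [mul_comm, div_mul_cancel₀ _ hσδ.ne']
      calc σ δ * (v ⬝ᵥ G0 δ *ᵥ v + ∑ i, u i δ * (v ⬝ᵥ G i δ *ᵥ v))
          = σ δ * (v ⬝ᵥ G0 δ *ᵥ v) + ∑ i, (σ δ * u i δ) * (v ⬝ᵥ G i δ *ᵥ v) := by
            rw [mul_add, Finset.mul_sum]
            congr 1
            exact Finset.sum_congr rfl fun i _ => by ring
        _ = σ δ * (v ⬝ᵥ G0 δ *ᵥ v)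
            + ∑ i, (∑ j ∈ t, φ j δ * xsel j.1 j.2 i) * (v ⬝ᵥ G i δ *ᵥ v) := by
            congr 1
            exact Finset.sum_congr rfl fun i _ => by rw [hσu i]
        _ = ∑ j ∈ t, φ j δ * (v ⬝ᵥ G0 δ *ᵥ v)
            + ∑ i, ∑ j ∈ t, (φ j δ * xsel j.1 j.2 i) * (v ⬝ᵥ G i δ *ᵥ v) := by
            rw [hσ]
            rw [Finset.sum_mul]
            congr 1
            exact Finset.sum_congr rfl fun i _ => by rw [Finset.sum_mul]
        _ = ∑ j ∈ t, φ j δ * (v ⬝ᵥ G0 δ *ᵥ v)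
            + ∑ j ∈ t, ∑ i, (φ j δ * xsel j.1 j.2 i) * (v ⬝ᵥ G i δ *ᵥ v) := by
            rw [Finset.sum_comm]
        _ = ∑ j ∈ t, φ j δ * (v ⬝ᵥ G0 δ *ᵥ v + ∑ i, xsel j.1 j.2 i * (v ⬝ᵥ G i δ *ᵥ v)) := by
            rw [← Finset.sum_add_distrib]
            refine Finset.sum_congr rfl fun j _ => ?_
            rw [mul_add, Finset.mul_sum]
            congr 1
            exact Finset.sum_congr rfl fun i _ => by ring
    have hRHS : 0 < ∑ j ∈ t, φ j δ
        * (v ⬝ᵥ G0 δ *ᵥ v + ∑ i, xsel j.1 j.2 i * (v ⬝ᵥ G i δ *ᵥ v)) := by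
      obtain ⟨j0, hj0t, hj0U⟩ := Set.mem_iUnion₂.mp (ht hδ)
      refine Finset.sum_pos' ?_ ⟨j0, hj0t, ?_⟩
      · intro k _
        rcases (hφnonneg k δ).eq_or_lt with h | h
        · rw [← h, zero_mul]
        · have := hUpos k.1 k.2 δ ⟨hφsupp k δ h, hδ⟩ v hv
          rw [quad_expand] at this
          exact le_of_lt (mul_pos h this)
      · have := hUpos j0.1 j0.2 δ ⟨hj0U, hδ⟩ v hv
        rw [quad_expand] at this
        exact mul_pos (hφpos j0 δ hj0U) this
    by_contra hle
    push_neg at hle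
    nlinarith
  -- uniform coercivity over K
  have hcoer : ∃ c > 0, ∀ δ ∈ K, ∀ v : Fin n → ℝ,
      c * (v ⬝ᵥ v) ≤ v ⬝ᵥ (G0 δ + ∑ i, u i δ • G i δ) *ᵥ v := by
    have hMcont : ContinuousOn (fun δ => G0 δ + ∑ i, u i δ • G i δ) K :=
      hG0c.add (continuousOn_finset_sum _ fun i _ => (hucont i).smul (hGc i))
    have hgcont := quadContOn hMcont
    have hT : IsCompact (K ×ˢ {w : Fin n → ℝ | w ⬝ᵥ w = 1}) := hK.prod sphere_compact
    have hTne : (K ×ˢ {w : Fin n → ℝ | w ⬝ᵥ w = 1}).Nonempty :=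
      hKne.prod (sphere_nonempty hn)
    obtain ⟨z0, hz0, hmin⟩ := hT.exists_isMinOn hTne
      (hgcont.mono (Set.prod_mono le_rfl (Set.subset_univ _)))
    refine ⟨z0.2 ⬝ᵥ (G0 z0.1 + ∑ i, u i z0.1 • G i z0.1) *ᵥ z0.2,
      hufeas z0.1 hz0.1 z0.2 (unit_ne_zero hz0.2), ?_⟩
    intro δ hδ v
    by_cases hv : v = 0
    · subst hv; simp
    · obtain ⟨w, hw, hscale⟩ := exists_unit hv
      rw [hscale]
      have hle := hmin (Set.mk_mem_prod hδ hw)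
      have hvv := myDot_self_nonneg v
      calc z0.2 ⬝ᵥ (G0 z0.1 + ∑ i, u i z0.1 • G i z0.1) *ᵥ z0.2 * (v ⬝ᵥ v)
          = (v ⬝ᵥ v) * (z0.2 ⬝ᵥ (G0 z0.1 + ∑ i, u i z0.1 • G i z0.1) *ᵥ z0.2) := mul_comm _ _
        _ ≤ (v ⬝ᵥ v) * (w ⬝ᵥ (G0 δ + ∑ i, u i δ • G i δ) *ᵥ w) :=
            mul_le_mul_of_nonneg_left hle hvv
  obtain ⟨c, hc, hcoer⟩ := hcoer
  -- uniform bounds on the coefficient matrices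
  have hB : ∀ i, ∃ B : ℝ, 0 ≤ B ∧ ∀ δ ∈ K, ∑ a, ∑ b, |G i δ a b| ≤ B := by
    intro i
    obtain ⟨δ0, hδ0, hmax⟩ := hK.exists_isMaxOn hKne (entryAbsContOn (hGc i))
    exact ⟨∑ a, ∑ b, |G i δ0 a b|,
      Finset.sum_nonneg fun a _ => Finset.sum_nonneg fun b _ => abs_nonneg _,
      fun δ hδ => hmax hδ⟩
  choose B hBnonneg hBle using hB
  set ε : ℝ := c / (∑ i, B i + 1) with hε
  have hsumB : 0 ≤ ∑ i, B i := Finset.sum_nonneg fun i _ => hBnonneg i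
  have hεpos : 0 < ε := div_pos hc (by linarith)
  have hεB : ε * (∑ i, B i) < c := by
    rw [hε, div_mul_eq_mul_div, div_lt_iff₀ (by linarith)]
    nlinarith
  -- Stone–Weierstrass approximation
  have hSW : ∀ i, ∃ q : MvPolynomial (Fin m) ℝ,
      ∀ δ ∈ K, |MvPolynomial.eval δ q - u i δ| < ε := by
    haveI : CompactSpace K := isCompact_iff_compactSpace.mp hK
    intro i
    set coord : Fin m → C(K, ℝ) :=
      fun a => ⟨fun δ => (δ : Fin m → ℝ) a, (continuous_apply a).comp continuous_subtype_val⟩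
      with hcoord
    set A : Subalgebra ℝ C(K, ℝ) :=
      (MvPolynomial.aeval coord : MvPolynomial (Fin m) ℝ →ₐ[ℝ] C(K,ℝ)).range with hA
    have heval : ∀ (r : MvPolynomial (Fin m) ℝ) (x : K),
        (MvPolynomial.aeval coord r) x = MvPolynomial.eval (x : Fin m → ℝ) r := by
      intro r x
      induction r using MvPolynomial.induction_on with
      | C a => simp
      | add f g hf hg => simp [hf, hg]
      | mul_X f a hf => rw [hcoord] at hf; simp [_root_.map_mul, hf, hcoord]
    have hsep : A.SeparatesPoints := by
      intro x y hxy
      have hne : ∃ a, (x : Fin m → ℝ) a ≠ (y : Fin m → ℝ) a := by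
        by_contra h
        push_neg at h
        exact hxy (Subtype.ext (funext h))
      obtain ⟨a, ha⟩ := hne
      exact ⟨coord a, ⟨coord a, ⟨MvPolynomial.X a, by simp⟩, rfl⟩, ha⟩
    have hcont : Continuous (K.restrict (u i)) := (hucont i).restrict
    obtain ⟨g, hg⟩ := ContinuousMap.exists_mem_subalgebra_near_continuous_of_separatesPoints
      A hsep (K.restrict (u i)) hcont ε hεpos
    obtain ⟨qi, hqi⟩ := g.2
    refine ⟨qi, fun δ hδ => ?_⟩
    have h1 : (g : C(K,ℝ)) ⟨δ, hδ⟩ = MvPolynomial.eval δ qi := by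
      rw [← hqi]; exact heval qi ⟨δ, hδ⟩
    have h2 := hg ⟨δ, hδ⟩
    rw [Real.norm_eq_abs] at h2
    have h3 : K.restrict (u i) ⟨δ, hδ⟩ = u i δ := rfl
    simpa [h1, h3] using h2
  choose q hq using hSW
  refine ⟨q, ?_⟩
  intro δ hδ
  refine Matrix.PosDef.of_dotProduct_mulVec_pos ?_ ?_
  · -- Hermitian
    rw [Matrix.IsHermitian, Matrix.conjTranspose_eq_transpose_of_trivial,
      Matrix.transpose_add, Matrix.transpose_sum]
    rw [hG0s δ hδ]
    congr 1
    refine Finset.sum_congr rfl fun i _ => ?_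
    rw [Matrix.transpose_smul, hGs i δ hδ]
  · -- positivity
    intro v hv
    have hstar : star v = v := by simp
    rw [hstar]
    rw [quad_expand]
    have hexp := quad_expand (G0 δ) (fun i => G i δ) (fun i => u i δ) v
    have hvv : 0 < v ⬝ᵥ v :=
      lt_of_le_of_ne (myDot_self_nonneg v) (fun h => hv (dotProduct_self_eq_zero.mp h.symm))
    have hco := hcoer δ hδ v
    rw [hexp] at hco
    have hterm : ∀ i, (u i δ - MvPolynomial.eval δ (q i)) * (v ⬝ᵥ G i δ *ᵥ v)
        ≤ ε * (B i * (v ⬝ᵥ v)) := by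
      intro i
      have h1 : |v ⬝ᵥ G i δ *ᵥ v| ≤ B i * (v ⬝ᵥ v) := by
        calc |v ⬝ᵥ G i δ *ᵥ v| ≤ (∑ a, ∑ b, |G i δ a b|) * (v ⬝ᵥ v) := quad_abs_le _ _
          _ ≤ B i * (v ⬝ᵥ v) := mul_le_mul_of_nonneg_right (hBle i δ hδ) (myDot_self_nonneg v)
      have h2 : |u i δ - MvPolynomial.eval δ (q i)| ≤ ε := by
        rw [abs_sub_comm]; exact (hq i δ hδ).le
      calc (u i δ - MvPolynomial.eval δ (q i)) * (v ⬝ᵥ G i δ *ᵥ v)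
          ≤ |(u i δ - MvPolynomial.eval δ (q i)) * (v ⬝ᵥ G i δ *ᵥ v)| := le_abs_self _
        _ = |u i δ - MvPolynomial.eval δ (q i)| * |v ⬝ᵥ G i δ *ᵥ v| := abs_mul _ _
        _ ≤ ε * (B i * (v ⬝ᵥ v)) := by
            apply mul_le_mul h2 h1 (abs_nonneg _) hεpos.le
    have hsum : ∑ i, (u i δ - MvPolynomial.eval δ (q i)) * (v ⬝ᵥ G i δ *ᵥ v)
        ≤ ε * ((∑ i, B i) * (v ⬝ᵥ v)) := by
      calc ∑ i, (u i δ - MvPolynomial.eval δ (q i)) * (v ⬝ᵥ G i δ *ᵥ v)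
          ≤ ∑ i, ε * (B i * (v ⬝ᵥ v)) := Finset.sum_le_sum fun i _ => hterm i
        _ = ε * ((∑ i, B i) * (v ⬝ᵥ v)) := by rw [Finset.sum_mul, Finset.mul_sum]
    have key : v ⬝ᵥ G0 δ *ᵥ v + ∑ i, MvPolynomial.eval δ (q i) * (v ⬝ᵥ G i δ *ᵥ v)
        = (v ⬝ᵥ G0 δ *ᵥ v + ∑ i, u i δ * (v ⬝ᵥ G i δ *ᵥ v))
          - ∑ i, (u i δ - MvPolynomial.eval δ (q i)) * (v ⬝ᵥ G i δ *ᵥ v) := by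
      simp only [sub_mul]
      rw [Finset.sum_sub_distrib]
      ring
    rw [key]
    have hlast : ε * ((∑ i, B i) * (v ⬝ᵥ v)) < c * (v ⬝ᵥ v) := by
      rw [← mul_assoc]
      exact mul_lt_mul_of_pos_right hεB hvv
    linarith
end

section
/- Let K ⊆ ℝ^m be a nonempty compact set and let G_0, G_1, …, G_p : K → ℝ^{n×n} be continuous maps taking values in the symmetric matrices, with G(x, δ) = G_0(δ) + Σ_{i=1}^p x_i G_i(δ). If for every δ ∈ K there exists x(δ) ∈ ℝ^p such that G(x(δ), δ) is positive definite, then there exists α > 0 such that for every δ ∈ K there exists x ∈ ℝ^p with G(x, δ) − 2α·I positive semidefinite. -/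
open Matrix

lemma auxA (n : ℕ) (A : Matrix (Fin n) (Fin n) ℝ) (hA : A.IsSymm) (c : ℝ)
    (h : ∀ v : Fin n → ℝ, v ⬝ᵥ v = 1 → c ≤ v ⬝ᵥ (A *ᵥ v)) :
    (A - c • (1 : Matrix (Fin n) (Fin n) ℝ)).PosSemidef := by
  refine Matrix.PosSemidef.of_dotProduct_mulVec_nonneg ?_ ?_
  · rw [Matrix.IsHermitian, conjTranspose_eq_transpose_of_trivial, Matrix.transpose_sub,
      hA, Matrix.transpose_smul, Matrix.transpose_one]
  · intro v
    rw [star_trivial, Matrix.sub_mulVec, Matrix.smul_mulVec, Matrix.one_mulVec,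
      dotProduct_sub, dotProduct_smul, smul_eq_mul, sub_nonneg]
    rcases eq_or_ne v 0 with rfl | hv
    · simp
    · have hvv : 0 < v ⬝ᵥ v := by
        rcases (Finset.sum_nonneg fun i _ => mul_self_nonneg (v i) :
          (0:ℝ) ≤ v ⬝ᵥ v).lt_or_eq with h1 | h1
        · exact h1
        · exact absurd (dotProduct_self_eq_zero.mp h1.symm) hv
      set t : ℝ := Real.sqrt (v ⬝ᵥ v) with ht
      have htpos : 0 < t := Real.sqrt_pos.mpr hvv
      have ht2 : t * t = v ⬝ᵥ v := Real.mul_self_sqrt hvv.le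
      have hw : (t⁻¹ • v) ⬝ᵥ (t⁻¹ • v) = 1 := by
        rw [smul_dotProduct, dotProduct_smul, smul_eq_mul, smul_eq_mul, ← mul_assoc, ← ht2]
        field_simp
      have := h _ hw
      rw [smul_dotProduct, Matrix.mulVec_smul, dotProduct_smul, smul_eq_mul, smul_eq_mul,
        ← mul_assoc] at this
      have h3 : c * (t * t) ≤ v ⬝ᵥ (A *ᵥ v) := by
        have := mul_le_mul_of_nonneg_left this (le_of_lt (mul_pos htpos htpos))
        calc c * (t * t) = t * t * c := by ring
        _ ≤ t * t * (t⁻¹ * t⁻¹ * (v ⬝ᵥ (A *ᵥ v))) := this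
        _ = v ⬝ᵥ (A *ᵥ v) := by field_simp
      rwa [ht2] at h3

lemma auxS (n : ℕ) : IsCompact {v : Fin n → ℝ | v ⬝ᵥ v = 1} := by
  have hc : Continuous fun v : Fin n → ℝ => v ⬝ᵥ v := by
    show Continuous fun v : Fin n → ℝ => ∑ i, v i * v i
    exact continuous_finset_sum _ fun i _ => (continuous_apply i).mul (continuous_apply i)
  have hclosed : IsClosed {v : Fin n → ℝ | v ⬝ᵥ v = 1} := isClosed_eq hc continuous_const
  refine Metric.isCompact_of_isClosed_isBounded hclosed ?_
  refine (Metric.isBounded_closedBall (x := (0 : Fin n → ℝ)) (r := 1)).subset ?_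
  intro v hv
  simp only [Metric.mem_closedBall, dist_zero_right]
  rw [pi_norm_le_iff_of_nonneg zero_le_one]
  intro i
  rw [Real.norm_eq_abs, ← sq_le_one_iff_abs_le_one, sq]
  calc v i * v i ≤ ∑ j, v j * v j :=
        Finset.single_le_sum (fun j _ => mul_self_nonneg (v j)) (Finset.mem_univ i)
  _ = 1 := hv


/-- step i of Bliman's proof: feasibility of the strict LMI on a
nonempty compact set yields a uniform margin `α > 0` with
`G(x, δ) − 2α·I ⪰ 0` solvable for every `δ ∈ K`. -/
theorem stmt1 (m n p : ℕ) (hm : 0 < m) (hn : 0 < n) (hp : 0 < p)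
    (K : Set (Fin m → ℝ)) (hK : IsCompact K) (hKne : K.Nonempty)
    (G0 : (Fin m → ℝ) → Matrix (Fin n) (Fin n) ℝ)
    (G : Fin p → (Fin m → ℝ) → Matrix (Fin n) (Fin n) ℝ)
    (hG0c : ContinuousOn G0 K) (hGc : ∀ i, ContinuousOn (G i) K)
    (hG0s : ∀ δ ∈ K, (G0 δ).IsSymm) (hGs : ∀ i, ∀ δ ∈ K, (G i δ).IsSymm)
    (hfeas : ∀ δ ∈ K, ∃ x : Fin p → ℝ, (G0 δ + ∑ i, x i • G i δ).PosDef) :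
    ∃ α : ℝ, 0 < α ∧ ∀ δ ∈ K, ∃ x : Fin p → ℝ,
      (G0 δ + ∑ i, x i • G i δ - (2 * α) • (1 : Matrix (Fin n) (Fin n) ℝ)).PosSemidef := by
  have hKc : CompactSpace K := isCompact_iff_compactSpace.mp hK
  set S : Set (Fin n → ℝ) := {v | v ⬝ᵥ v = 1} with hSdef
  have hScomp : IsCompact S := auxS n
  have hSne : S.Nonempty := by
    refine ⟨Pi.single ⟨0, hn⟩ 1, ?_⟩
    simp [hSdef, dotProduct, Pi.single_apply]
  have key : ∀ δ0 : K, ∃ (x : Fin p → ℝ) (c : ℝ) (U : Set K),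
      0 < c ∧ IsOpen U ∧ δ0 ∈ U ∧ ∀ δ : K, δ ∈ U → ∀ v ∈ S,
        c ≤ v ⬝ᵥ ((G0 ↑δ + ∑ i, x i • G i ↑δ) *ᵥ v) := by
    intro δ0
    obtain ⟨x, hx⟩ := hfeas ↑δ0 δ0.2
    set F : K → Matrix (Fin n) (Fin n) ℝ := fun δ => G0 ↑δ + ∑ i, x i • G i ↑δ with hF
    have hFc : Continuous F := by
      exact hG0c.restrict.add
        (continuous_finset_sum _ fun i _ => ((hGc i).restrict).const_smul (x i))
    have hfc : Continuous fun q : K × (Fin n → ℝ) => q.2 ⬝ᵥ (F q.1 *ᵥ q.2) := by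
      show Continuous fun q : K × (Fin n → ℝ) => ∑ j, q.2 j * ∑ k, F q.1 j k * q.2 k
      refine continuous_finset_sum _ fun j _ => Continuous.mul
        ((continuous_apply j).comp continuous_snd) (continuous_finset_sum _ fun k _ => ?_)
      exact Continuous.mul
        ((continuous_apply k).comp ((continuous_apply j).comp (hFc.comp continuous_fst)))
        ((continuous_apply k).comp continuous_snd)
    have hcont0 : Continuous fun v : Fin n → ℝ => v ⬝ᵥ (F δ0 *ᵥ v) :=
      hfc.comp (continuous_const.prodMk continuous_id)
    obtain ⟨v0, hv0S, hmin⟩ := hScomp.exists_isMinOn hSne hcont0.continuousOn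
    set c : ℝ := v0 ⬝ᵥ (F δ0 *ᵥ v0) with hc
    have hcpos : 0 < c := by
      have hv0ne : v0 ≠ 0 := by
        intro h0
        rw [hSdef] at hv0S
        simp [h0] at hv0S
      simpa [star_trivial] using hx.dotProduct_mulVec_pos hv0ne
    set W : Set (K × (Fin n → ℝ)) :=
      (fun q : K × (Fin n → ℝ) => q.2 ⬝ᵥ (F q.1 *ᵥ q.2)) ⁻¹' Set.Ioi (c / 2) with hW
    have hWopen : IsOpen W := isOpen_Ioi.preimage hfc
    have hsub0 : ({δ0} : Set K) ×ˢ S ⊆ W := by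
      rintro ⟨a, v⟩ ⟨ha, hv⟩
      simp only [Set.mem_singleton_iff] at ha
      subst ha
      exact lt_of_lt_of_le (half_lt_self hcpos) (hmin hv)
    obtain ⟨u, vs, huo, hvo, hδ0u, hSvs, hsub⟩ :=
      generalized_tube_lemma isCompact_singleton hScomp hWopen hsub0
    exact ⟨x, c / 2, u, half_pos hcpos, huo, hδ0u rfl,
      fun δ hδ v hvS => le_of_lt (hsub (Set.mk_mem_prod hδ (hSvs hvS)))⟩
  choose xw cw Uw hcw hUo hUmem hUineq using key
  obtain ⟨t, ht⟩ := isCompact_univ.elim_finite_subcover Uw hUo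
    (fun δ _ => Set.mem_iUnion.mpr ⟨δ, hUmem δ⟩)
  have htne : t.Nonempty := by
    obtain ⟨δK, hδK⟩ := hKne
    obtain ⟨δ0, hδ0t, _⟩ := Set.mem_iUnion₂.mp (ht (Set.mem_univ (⟨δK, hδK⟩ : K)))
    exact ⟨δ0, hδ0t⟩
  set α : ℝ := t.inf' htne cw / 2 with hα
  have hαpos : 0 < α := by
    apply half_pos
    rw [Finset.lt_inf'_iff]
    exact fun δ0 _ => hcw δ0
  refine ⟨α, hαpos, fun δ hδ => ?_⟩
  obtain ⟨δ0, hδ0t, hδU⟩ := Set.mem_iUnion₂.mp (ht (Set.mem_univ (⟨δ, hδ⟩ : K)))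
  refine ⟨xw δ0, ?_⟩
  have hsymm : (G0 δ + ∑ i, xw δ0 i • G i δ).IsSymm := by
    refine (hG0s δ hδ).add ?_
    rw [Matrix.IsSymm, Matrix.transpose_sum]
    exact Finset.sum_congr rfl fun i _ => ((hGs i δ hδ).smul (xw δ0 i))
  apply auxA n _ hsymm
  intro v hv
  calc 2 * α = t.inf' htne cw := by rw [hα]; ring
  _ ≤ cw δ0 := Finset.inf'_le _ hδ0t
  _ ≤ v ⬝ᵥ ((G0 δ + ∑ i, xw δ0 i • G i δ) *ᵥ v) := hUineq δ0 ⟨δ, hδ⟩ hδU v hv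
end

section
/- Let K ⊆ ℂ^m be a nonempty compact set, let G_0 : K → ℂ^{n×n} be a continuous map taking Hermitian values, and let G_1, …, G_p : K → ℂ^{n×n} be continuous. For x ∈ ℂ^p and δ ∈ K define the Hermitian matrix G(x, δ) = G_0(δ) + Σ_{i=1}^p (x_i G_i(δ) + conj(x_i) G_i(δ)*). If for every δ ∈ K there exists x(δ) ∈ ℂ^p such that G(x(δ), δ) is positive definite, then there exist polynomials p_1, …, p_p in the 2m complex variables (z_1, …, z_m, w_1, …, w_m) with complex coefficients such that, setting x^*(δ) = (p_1(δ, conj(δ)), …, p_p(δ, conj(δ))), the matrix G(x^*(δ), δ) is positive definite for every δ ∈ K. -/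
open Matrix Set
open scoped ComplexOrder

lemma quad_conj {n : ℕ} {A : Matrix (Fin n) (Fin n) ℂ} (hA : A.IsHermitian)
    (v : Fin n → ℂ) : (starRingEnd ℂ) (star v ⬝ᵥ A *ᵥ v) = star v ⬝ᵥ A *ᵥ v := by
  change star _ = _
  conv_lhs => rw [star_dotProduct, star_star, star_mulVec, hA.eq, ← dotProduct_mulVec]

lemma posDef_of_re {n : ℕ} {A : Matrix (Fin n) (Fin n) ℂ} (hA : A.IsHermitian)
    (h : ∀ v : Fin n → ℂ, v ≠ 0 → 0 < (star v ⬝ᵥ A *ᵥ v).re) : A.PosDef := by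
  refine posDef_iff_dotProduct_mulVec.mpr ⟨hA, fun v hv => ?_⟩
  have him := quad_conj hA v
  rw [Complex.conj_eq_iff_im] at him
  rw [Complex.lt_def]
  exact ⟨by simpa using h v hv, by simpa using him.symm⟩

lemma quad_smul {n : ℕ} (A : Matrix (Fin n) (Fin n) ℂ) (c : ℝ) (v : Fin n → ℂ) :
    star ((c:ℂ) • v) ⬝ᵥ A *ᵥ ((c:ℂ) • v) = ((c:ℝ)^2 : ℝ) * (star v ⬝ᵥ A *ᵥ v) := by
  simp [star_smul, smul_dotProduct, dotProduct_smul, mulVec_smul, smul_smul]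
  ring

noncomputable def quadL {n : ℕ} (v : Fin n → ℂ) : Matrix (Fin n) (Fin n) ℂ →ₗ[ℂ] ℂ where
  toFun A := star v ⬝ᵥ (A *ᵥ v)
  map_add' A B := by simp [add_mulVec, dotProduct_add]
  map_smul' c A := by simp [smul_mulVec, dotProduct_smul]

lemma quad_decomp {n q : ℕ} (A0 : Matrix (Fin n) (Fin n) ℂ)
    (Gs : Fin q → Matrix (Fin n) (Fin n) ℂ) (x : Fin q → ℂ) (v : Fin n → ℂ) :
    star v ⬝ᵥ ((A0 + ∑ i, (x i • Gs i + (starRingEnd ℂ) (x i) • (Gs i)ᴴ)) *ᵥ v)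
      = (star v ⬝ᵥ (A0 *ᵥ v)) + ∑ i, (x i * (star v ⬝ᵥ (Gs i *ᵥ v)) +
          (starRingEnd ℂ) (x i) * (star v ⬝ᵥ ((Gs i)ᴴ *ᵥ v))) := by
  change quadL v _ = quadL v A0 + ∑ i, (x i * quadL v (Gs i) + _ * quadL v ((Gs i)ᴴ))
  rw [map_add, map_sum]
  congr 1
  refine Finset.sum_congr rfl fun i _ => ?_
  rw [map_add, _root_.map_smul, _root_.map_smul, smul_eq_mul, smul_eq_mul]

lemma convex_comb {ι : Type*} [Fintype ι] {q : ℕ} (c : ι → ℝ) (hc : ∑ k, c k = 1)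
    (A : ℂ) (g h : Fin q → ℂ) (x : ι → Fin q → ℂ) :
    A + ∑ i, ((∑ k, ((c k : ℝ) : ℂ) * x k i) * g i +
        (starRingEnd ℂ) (∑ k, ((c k : ℝ) : ℂ) * x k i) * h i)
      = ∑ k, ((c k : ℝ) : ℂ) * (A + ∑ i, (x k i * g i + (starRingEnd ℂ) (x k i) * h i)) := by
  have h1 : (∑ k, ((c k : ℝ) : ℂ)) = 1 := by
    exact_mod_cast congrArg (Complex.ofReal) hc
  simp only [map_sum, _root_.map_mul, Complex.conj_ofReal, Finset.sum_mul, mul_add, Finset.mul_sum,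
    Finset.sum_add_distrib]
  rw [← Finset.sum_mul, h1, one_mul]
  congr 1
  congr 1 <;> rw [Finset.sum_comm] <;>
    exact Finset.sum_congr rfl fun k _ => Finset.sum_congr rfl fun i _ => by ring

lemma pert {q : ℕ} (A : ℂ) (g h : Fin q → ℂ) (x y : Fin q → ℂ) :
    A + ∑ i, (y i * g i + (starRingEnd ℂ) (y i) * h i)
      = (A + ∑ i, (x i * g i + (starRingEnd ℂ) (x i) * h i)) +
        ∑ i, ((y i - x i) * g i + (starRingEnd ℂ) (y i - x i) * h i) := by
  rw [add_assoc, ← Finset.sum_add_distrib]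
  congr 1
  refine Finset.sum_congr rfl fun i _ => ?_
  simp only [map_sub]
  ring

/-- first part of Theorem `th:ours`: a complex-parameter-dependent
LMI which is pointwise feasible on a nonempty compact set `K ⊆ ℂ^m` admits a
solution which is polynomial in `δ` and `conj δ`. -/
theorem stmt5 (m n p : ℕ) (hm : 0 < m) (hn : 0 < n) (hp : 0 < p)
    (K : Set (Fin m → ℂ)) (hK : IsCompact K) (hKne : K.Nonempty)
    (G0 : (Fin m → ℂ) → Matrix (Fin n) (Fin n) ℂ)
    (G : Fin p → (Fin m → ℂ) → Matrix (Fin n) (Fin n) ℂ)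
    (hG0c : ContinuousOn G0 K) (hG0h : ∀ δ ∈ K, (G0 δ).IsHermitian)
    (hGc : ∀ i, ContinuousOn (G i) K)
    (hfeas : ∀ δ ∈ K, ∃ x : Fin p → ℂ,
      (G0 δ + ∑ i, (x i • G i δ + (starRingEnd ℂ) (x i) • (G i δ)ᴴ)).PosDef) :
    ∃ P : Fin p → MvPolynomial (Fin m ⊕ Fin m) ℂ,
      ∀ δ ∈ K,
        (G0 δ + ∑ i,
          ((MvPolynomial.eval (Sum.elim δ fun j => (starRingEnd ℂ) (δ j)) (P i)) • G i δ +
            (starRingEnd ℂ)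
              (MvPolynomial.eval (Sum.elim δ fun j => (starRingEnd ℂ) (δ j)) (P i)) •
              (G i δ)ᴴ)).PosDef := by
  haveI : CompactSpace K := isCompact_iff_compactSpace.mp hK
  haveI : Nonempty (Fin n) := ⟨⟨0, hn⟩⟩
  haveI : Nonempty K := hKne.to_subtype
  -- the LMI matrix
  set Mx : (Fin p → ℂ) → (Fin m → ℂ) → Matrix (Fin n) (Fin n) ℂ :=
    fun x δ => G0 δ + ∑ i, (x i • G i δ + (starRingEnd ℂ) (x i) • (G i δ)ᴴ) with hMx
  -- its quadratic form (real part)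
  set Q : (Fin p → ℂ) → K → (Fin n → ℂ) → ℝ :=
    fun x δ v => (star v ⬝ᵥ (Mx x δ.1 *ᵥ v)).re with hQ
  set S : Set (Fin n → ℂ) := Metric.sphere 0 1 with hS
  -- hermitian
  have hterm : ∀ (c : ℂ) (A : Matrix (Fin n) (Fin n) ℂ),
      (c • A + (starRingEnd ℂ) c • Aᴴ).IsHermitian := by
    intro c A
    show _ᴴ = _
    rw [conjTranspose_add, conjTranspose_smul, conjTranspose_smul,
      conjTranspose_conjTranspose, add_comm]
    simp
  have hherm : ∀ (x : Fin p → ℂ) (δ : K), (Mx x δ.1).IsHermitian := by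
    intro x δ
    refine Matrix.IsHermitian.add (hG0h δ.1 δ.2) ?_
    show _ᴴ = _
    rw [conjTranspose_sum]
    exact Finset.sum_congr rfl fun i _ => hterm (x i) (G i δ.1)
  -- continuity of Q jointly
  have cG0 : Continuous fun δ : K => G0 δ.1 := hG0c.restrict
  have cG : ∀ i, Continuous fun δ : K => G i δ.1 := fun i => (hGc i).restrict
  have cM : Continuous fun z : (Fin p → ℂ) × K => Mx z.1 z.2.1 := by
    apply Continuous.add (cG0.comp continuous_snd)
    apply continuous_finset_sum
    intro i _
    exact ((continuous_apply i |>.comp continuous_fst).smul ((cG i).comp continuous_snd)).add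
      (((Complex.continuous_conj.comp (continuous_apply i |>.comp continuous_fst))).smul
        (((cG i).comp continuous_snd).matrix_conjTranspose))
  have cQ : Continuous fun z : (Fin p → ℂ) × K × (Fin n → ℂ) => Q z.1 z.2.1 z.2.2 := by
    apply Complex.continuous_re.comp
    have h1 : Continuous fun z : (Fin p → ℂ) × K × (Fin n → ℂ) => Mx z.1 z.2.1 :=
      cM.comp (continuous_fst.prodMk (continuous_fst.comp continuous_snd))
    exact (continuous_star.comp (continuous_snd.comp continuous_snd)).dotProduct
      (h1.matrix_mulVec (continuous_snd.comp continuous_snd))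
  -- sphere facts
  have hSne : S.Nonempty := by
    refine ⟨fun _ => 1, ?_⟩
    rw [hS, mem_sphere_zero_iff_norm]
    exact pi_norm_const (1:ℂ) |>.trans (by simp)
  have hScomp : IsCompact S := isCompact_sphere 0 1
  have hSne0 : ∀ v ∈ S, v ≠ (0 : Fin n → ℂ) := by
    intro v hv h0
    have := mem_sphere_zero_iff_norm.mp hv
    simp [h0] at this
  have hcrit : ∀ (x : Fin p → ℂ) (δ : K), (∀ v ∈ S, 0 < Q x δ v) → (Mx x δ.1).PosDef := by
    intro x δ h
    refine posDef_of_re (hherm x δ) (fun v hv => ?_)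
    have hc : ‖v‖ ≠ 0 := norm_ne_zero_iff.mpr hv
    set u : Fin n → ℂ := ((‖v‖⁻¹ : ℝ) : ℂ) • v with hu
    have huS : u ∈ S := by
      rw [hS, mem_sphere_zero_iff_norm, hu, norm_smul]
      simp [inv_mul_cancel₀ hc]
    have hveq : v = ((‖v‖ : ℝ) : ℂ) • u := by
      rw [hu, smul_smul, ← Complex.ofReal_mul, mul_inv_cancel₀ hc, Complex.ofReal_one, one_smul]
    have hq : (star v ⬝ᵥ (Mx x δ.1 *ᵥ v)).re = ‖v‖^2 * Q x δ u := by
      conv_lhs => rw [hveq]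
      rw [quad_smul]
      exact Complex.re_ofReal_mul _ _
    rw [hq]
    exact mul_pos (pow_pos (norm_pos_iff.mpr hv) 2) (h u huS)
  -- local feasibility with a uniform neighborhood
  have hloc : ∀ δ0 : K, ∃ (x0 : Fin p → ℂ) (U : Set K), IsOpen U ∧ δ0 ∈ U ∧
      ∀ δ ∈ U, ∀ v ∈ S, 0 < Q x0 δ v := by
    intro δ0
    obtain ⟨x0, hx0⟩ := hfeas δ0.1 δ0.2
    have hQpos : ∀ v ∈ S, 0 < Q x0 δ0 v := by
      intro v hv
      have hlt : (0:ℂ) < star v ⬝ᵥ (Mx x0 δ0.1 *ᵥ v) := hx0.dotProduct_mulVec_pos (hSne0 v hv)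
      rw [Complex.lt_def] at hlt
      simpa using hlt.1
    have hWo : IsOpen {z : K × (Fin n → ℂ) | 0 < Q x0 z.1 z.2} := by
      have hc2 : Continuous fun z : K × (Fin n → ℂ) => Q x0 z.1 z.2 :=
        cQ.comp (continuous_const.prodMk continuous_id)
      exact isOpen_lt continuous_const hc2
    have hsub : ({δ0} : Set K) ×ˢ S ⊆ {z | 0 < Q x0 z.1 z.2} := by
      rintro ⟨a, b⟩ ⟨ha, hb⟩
      rcases ha with rfl
      exact hQpos b hb
    obtain ⟨u, w, huo, hwo, hδu, hSw, huw⟩ :=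
      generalized_tube_lemma isCompact_singleton hScomp hWo hsub
    exact ⟨x0, u, huo, singleton_subset_iff.mp hδu,
      fun δ hδ v hv => huw (Set.mk_mem_prod hδ (hSw hv))⟩
  choose x0 U hUo hUm hU using hloc
  obtain ⟨t, ht⟩ := isCompact_univ.elim_finite_subcover U hUo
    (fun δ _ => mem_iUnion.2 ⟨δ, hUm δ⟩)
  obtain ⟨f, hf⟩ := PartitionOfUnity.exists_isSubordinate (s := (univ : Set K))
    isClosed_univ (fun k : t => U k.1) (fun k => hUo k.1)
    (by
      intro δ _
      rcases mem_iUnion₂.mp (ht (mem_univ δ)) with ⟨i, hit, hUi⟩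
      exact mem_iUnion.2 ⟨⟨i, hit⟩, hUi⟩)
  -- the averaged candidate solution
  set xbar : K → (Fin p → ℂ) := fun δ => ∑ k : t, f k δ • x0 k.1 with hxbar
  have cxbar : Continuous xbar :=
    continuous_finset_sum _ fun k _ => ((f k).continuous).smul continuous_const
  have hsum1 : ∀ δ : K, ∑ k : t, f k δ = 1 := fun δ => by
    have := f.sum_eq_one (mem_univ δ)
    rwa [finsum_eq_sum_of_fintype] at this
  have hxbari : ∀ (δ : K) (i : Fin p), xbar δ i = ∑ k : t, ((f k δ : ℝ) : ℂ) * x0 k.1 i := by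
    intro δ i
    rw [hxbar]
    simp [Finset.sum_apply, Complex.real_smul]
  have hdec : ∀ (x : Fin p → ℂ) (δ : K) (v : Fin n → ℂ),
      star v ⬝ᵥ (Mx x δ.1 *ᵥ v) = (star v ⬝ᵥ (G0 δ.1 *ᵥ v)) +
        ∑ i, (x i * (star v ⬝ᵥ (G i δ.1 *ᵥ v)) +
          (starRingEnd ℂ) (x i) * (star v ⬝ᵥ ((G i δ.1)ᴴ *ᵥ v))) :=
    fun x δ v => quad_decomp (G0 δ.1) (fun i => G i δ.1) x v
  -- feasibility of xbar
  have hxbarpos : ∀ δ : K, ∀ v ∈ S, 0 < Q (xbar δ) δ v := by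
    intro δ v hv
    have hkey : star v ⬝ᵥ (Mx (xbar δ) δ.1 *ᵥ v)
        = ∑ k : t, ((f k δ : ℝ) : ℂ) * (star v ⬝ᵥ (Mx (x0 k.1) δ.1 *ᵥ v)) := by
      simp only [hdec]
      rw [← convex_comb (fun k : t => f k δ) (hsum1 δ) _ _ _ (fun k : t => x0 k.1)]
      congr 1
      refine Finset.sum_congr rfl fun i _ => ?_
      rw [hxbari]
    have hQsum : Q (xbar δ) δ v = ∑ k : t, (f k δ) * Q (x0 k.1) δ v := by
      rw [hQ]
      simp only
      rw [hkey, Complex.re_sum]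
      exact Finset.sum_congr rfl fun k _ => Complex.re_ofReal_mul _ _
    rw [hQsum]
    refine Finset.sum_pos' (fun k _ => ?_) ?_
    · rcases eq_or_ne (f k δ) 0 with h0 | h0
      · simp [h0]
      · have hδk : δ ∈ U k.1 := hf k (subset_tsupport _ h0)
        exact le_of_lt (mul_pos ((f.nonneg k δ).lt_of_ne (Ne.symm h0)) (hU k.1 δ hδk v hv))
    · obtain ⟨k, hk⟩ := f.exists_pos (mem_univ δ)
      exact ⟨k, Finset.mem_univ k,
        mul_pos hk (hU k.1 δ (hf k (subset_tsupport _ hk.ne')) v hv)⟩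
  -- uniform margin by compactness
  have hΦc : Continuous fun z : K × (Fin n → ℂ) => Q (xbar z.1) z.1 z.2 :=
    cQ.comp ((cxbar.comp continuous_fst).prodMk (continuous_fst.prodMk continuous_snd))
  have hCc : IsCompact ((univ : Set K) ×ˢ S) := isCompact_univ.prod hScomp
  have hCne : ((univ : Set K) ×ˢ S).Nonempty := univ_nonempty.prod hSne
  obtain ⟨z0, hz0C, hz0min⟩ := hCc.exists_isMinOn hCne hΦc.continuousOn
  set cmin := Q (xbar z0.1) z0.1 z0.2 with hcmin
  have hcminpos : 0 < cmin := hxbarpos z0.1 z0.2 (mem_prod.mp hz0C).2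
  set ψ : K × (Fin n → ℂ) → ℝ := fun z =>
    ∑ i, (‖star z.2 ⬝ᵥ (G i z.1.1 *ᵥ z.2)‖ + ‖star z.2 ⬝ᵥ ((G i z.1.1)ᴴ *ᵥ z.2)‖) with hψ
  have hψnn : ∀ z, 0 ≤ ψ z := fun z =>
    Finset.sum_nonneg fun i _ => add_nonneg (norm_nonneg _) (norm_nonneg _)
  have hψc : Continuous ψ := by
    apply continuous_finset_sum
    intro i _
    have h2 : Continuous fun z : K × (Fin n → ℂ) => star z.2 :=
      continuous_star.comp continuous_snd
    exact ((h2.dotProduct (((cG i).comp continuous_fst).matrix_mulVec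
        continuous_snd)).norm).add
      ((h2.dotProduct ((((cG i).comp continuous_fst).matrix_conjTranspose).matrix_mulVec
        continuous_snd)).norm)
  obtain ⟨z1, hz1C, hz1max⟩ := hCc.exists_isMaxOn hCne hψc.continuousOn
  set B := ψ z1 with hB
  have hBnn : 0 ≤ B := le_trans (hψnn z0) (hz1max hz0C)
  set ε := cmin / (B + 1) with hε
  have hεpos : 0 < ε := div_pos hcminpos (by linarith)
  -- robustness of the margin
  have hrob : ∀ (δ : K) (y : Fin p → ℂ), (∀ i, ‖y i - xbar δ i‖ ≤ ε) →
      ∀ v ∈ S, 0 < Q y δ v := by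
    intro δ y hy v hv
    have hp1 : star v ⬝ᵥ (Mx y δ.1 *ᵥ v) = star v ⬝ᵥ (Mx (xbar δ) δ.1 *ᵥ v) +
        ∑ i, ((y i - xbar δ i) * (star v ⬝ᵥ (G i δ.1 *ᵥ v)) +
          (starRingEnd ℂ) (y i - xbar δ i) * (star v ⬝ᵥ ((G i δ.1)ᴴ *ᵥ v))) := by
      rw [hdec, hdec]
      exact pert _ _ _ _ _
    have hQy : Q y δ v = Q (xbar δ) δ v +
        (∑ i, ((y i - xbar δ i) * (star v ⬝ᵥ (G i δ.1 *ᵥ v)) +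
          (starRingEnd ℂ) (y i - xbar δ i) * (star v ⬝ᵥ ((G i δ.1)ᴴ *ᵥ v)))).re := by
      rw [hQ]
      simp only
      rw [hp1, Complex.add_re]
    have hψδv : ψ (δ, v) ≤ B := hz1max (Set.mk_mem_prod (mem_univ δ) hv)
    have hbound : |(∑ i, ((y i - xbar δ i) * (star v ⬝ᵥ (G i δ.1 *ᵥ v)) +
        (starRingEnd ℂ) (y i - xbar δ i) * (star v ⬝ᵥ ((G i δ.1)ᴴ *ᵥ v)))).re| ≤ ε * B := by
      refine le_trans (Complex.abs_re_le_norm _) ?_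
      refine le_trans (norm_sum_le _ _) ?_
      have step : ∀ i : Fin p, ‖(y i - xbar δ i) * (star v ⬝ᵥ (G i δ.1 *ᵥ v)) +
          (starRingEnd ℂ) (y i - xbar δ i) * (star v ⬝ᵥ ((G i δ.1)ᴴ *ᵥ v))‖
          ≤ ε * (‖star v ⬝ᵥ (G i δ.1 *ᵥ v)‖ + ‖star v ⬝ᵥ ((G i δ.1)ᴴ *ᵥ v)‖) := by
        intro i
        refine le_trans (norm_add_le _ _) ?_
        rw [norm_mul, norm_mul, RCLike.norm_conj, mul_add]
        exact add_le_add (mul_le_mul_of_nonneg_right (hy i) (norm_nonneg _))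
          (mul_le_mul_of_nonneg_right (hy i) (norm_nonneg _))
      refine le_trans (Finset.sum_le_sum fun i _ => step i) ?_
      rw [← Finset.mul_sum]
      exact mul_le_mul_of_nonneg_left hψδv (le_of_lt hεpos)
    have hεB : ε * B < cmin := by
      rw [hε, div_mul_eq_mul_div, div_lt_iff₀ (by linarith)]
      nlinarith
    have hQxbar : cmin ≤ Q (xbar δ) δ v := hz0min (Set.mk_mem_prod (mem_univ δ) hv)
    have habs := neg_abs_le ((∑ i, ((y i - xbar δ i) * (star v ⬝ᵥ (G i δ.1 *ᵥ v)) +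
        (starRingEnd ℂ) (y i - xbar δ i) * (star v ⬝ᵥ ((G i δ.1)ᴴ *ᵥ v)))).re)
    rw [hQy]
    linarith
  -- Stone-Weierstrass
  set coord : Fin m → C(K, ℂ) :=
    fun j => ⟨fun δ => δ.1 j, (continuous_apply j).comp continuous_subtype_val⟩ with hcoord
  set A : StarSubalgebra ℂ C(K, ℂ) := StarAlgebra.adjoin ℂ (Set.range coord) with hA
  have hsep : A.SeparatesPoints := by
    intro δ1 δ2 hne
    have hne' : δ1.1 ≠ δ2.1 := fun h => hne (Subtype.ext h)
    obtain ⟨j, hj⟩ := Function.ne_iff.mp hne'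
    exact ⟨_, ⟨coord j, StarAlgebra.subset_adjoin ℂ _ (Set.mem_range_self j), rfl⟩, hj⟩
  have hdense := ContinuousMap.starSubalgebra_topologicalClosure_eq_top_of_separatesPoints A hsep
  set xbarC : Fin p → C(K, ℂ) :=
    fun i => ⟨fun δ => xbar δ i, (continuous_apply i).comp cxbar⟩ with hxbarC
  have happrox : ∀ i : Fin p, ∃ g ∈ A, dist (xbarC i) g < ε := by
    intro i
    have h1 : xbarC i ∈ A.topologicalClosure := by rw [hdense]; trivial
    exact Metric.mem_closure_iff.mp h1 ε hεpos
  have hrep : ∀ g ∈ A, ∃ Pg : MvPolynomial (Fin m ⊕ Fin m) ℂ, ∀ δ : K,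
      g δ = MvPolynomial.eval (Sum.elim δ.1 fun j => (starRingEnd ℂ) (δ.1 j)) Pg := by
    intro g hg
    induction hg using StarAlgebra.adjoin_induction with
    | mem f hfm =>
      obtain ⟨j, rfl⟩ := hfm
      exact ⟨MvPolynomial.X (Sum.inl j), fun δ => by simp [hcoord]⟩
    | algebraMap r => exact ⟨MvPolynomial.C r, fun δ => by simp⟩
    | add f1 f2 _ _ ih1 ih2 =>
      obtain ⟨P1, h1⟩ := ih1
      obtain ⟨P2, h2⟩ := ih2
      exact ⟨P1 + P2, fun δ => by simp [h1 δ, h2 δ]⟩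
    | mul f1 f2 _ _ ih1 ih2 =>
      obtain ⟨P1, h1⟩ := ih1
      obtain ⟨P2, h2⟩ := ih2
      exact ⟨P1 * P2, fun δ => by simp [h1 δ, h2 δ]⟩
    | star f1 _ ih =>
      obtain ⟨P1, h1⟩ := ih
      refine ⟨MvPolynomial.rename Sum.swap (MvPolynomial.map (starRingEnd ℂ) P1), fun δ => ?_⟩
      have hst : (star f1) δ = (starRingEnd ℂ) (f1 δ) := rfl
      rw [hst, h1 δ, MvPolynomial.eval_rename, MvPolynomial.eval_map]
      have hc1 : (starRingEnd ℂ) (MvPolynomial.eval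
          (Sum.elim δ.1 fun j => (starRingEnd ℂ) (δ.1 j)) P1)
          = MvPolynomial.eval₂ ((starRingEnd ℂ).comp (RingHom.id ℂ))
            ((starRingEnd ℂ) ∘ (Sum.elim δ.1 fun j => (starRingEnd ℂ) (δ.1 j))) P1 :=
        MvPolynomial.eval₂_comp_left _ _ _ _
      rw [hc1]
      congr 1
      funext s
      cases s with
      | inl j => simp
      | inr j => simp
  choose gfun hgA hgdist using happrox
  choose Pg hPg using fun i => hrep (gfun i) (hgA i)
  refine ⟨Pg, fun δ hδ => ?_⟩
  set δ' : K := ⟨δ, hδ⟩ with hδ'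
  set y : Fin p → ℂ :=
    fun i => MvPolynomial.eval (Sum.elim δ fun j => (starRingEnd ℂ) (δ j)) (Pg i) with hy
  have hyε : ∀ i, ‖y i - xbar δ' i‖ ≤ ε := by
    intro i
    have h1 : y i = gfun i δ' := (hPg i δ').symm
    have h2 : dist (xbarC i δ') (gfun i δ') ≤ dist (xbarC i) (gfun i) :=
      ContinuousMap.dist_apply_le_dist δ'
    have h3 : ‖y i - xbar δ' i‖ = dist (xbarC i δ') (gfun i δ') := by
      rw [h1, dist_comm, dist_eq_norm]
      rfl
    rw [h3]
    exact le_of_lt (lt_of_le_of_lt h2 (hgdist i))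
  have hfin := hcrit y δ' (hrob δ' y hyε)
  rw [hMx] at hfin
  exact hfin
end

section
/- Fix positive integers k1, k2 and real matrices A11 ∈ ℝ^{k1×k1}, A12 ∈ ℝ^{k1×k2}, A21 ∈ ℝ^{k2×k1}, A22 ∈ ℝ^{k2×k2}, with A22 Schur stable, and for |δ| ≤ 1 set M(δ) = A11 + A12 (I − δ A22)^{-1} δ A21. Then M(δ) is Schur stable for every δ ∈ ℂ with |δ| = 1 if and only if M(δ) is Schur stable for every δ ∈ ℂ with |δ| ≤ 1. -/
open Matrix Filter Metric

section aux

attribute [local instance] Matrix.linftyOpNormedRing Matrix.linftyOpNormedAlgebra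

variable {m : Type*} [Fintype m] [DecidableEq m] [Nonempty m]

theorem aux1 {A : Matrix m m ℂ} (h : ∀ μ ∈ spectrum ℂ A, ‖μ‖ < 1) :
    ∃ N : ℕ, 1 ≤ N ∧ ‖A ^ N‖ < 1/2 := by
  have hρ : spectralRadius ℂ A < 1 := by
    obtain ⟨z, hz, hz'⟩ := spectrum.exists_nnnorm_eq_spectralRadius A
    rw [← hz']
    exact_mod_cast (by simpa [← NNReal.coe_lt_coe] using h z hz : ‖z‖₊ < 1)
  obtain ⟨c, hc1, hc2⟩ := exists_between hρ
  have hg := spectrum.pow_nnnorm_pow_one_div_tendsto_nhds_spectralRadius A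
  have hev : ∀ᶠ n : ℕ in atTop, (‖A ^ n‖₊ : ENNReal) ^ (1 / (n:ℝ)) < c :=
    hg.eventually_lt_const hc1
  have hc0 : Tendsto (fun n : ℕ => c ^ n) atTop (nhds 0) :=
    ENNReal.tendsto_pow_atTop_nhds_zero_of_lt_one hc2
  have hev2 : ∀ᶠ n : ℕ in atTop, c ^ n < 1/2 :=
    hc0.eventually_lt_const (by norm_num)
  obtain ⟨N, hN⟩ := ((hev.and hev2).and (eventually_ge_atTop 1)).exists
  obtain ⟨⟨hN2, hN3⟩, hN1⟩ := hN
  refine ⟨N, hN1, ?_⟩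
  have hNne : (N:ℝ) ≠ 0 := by positivity
  have key : (‖A ^ N‖₊ : ENNReal) < c ^ N := by
    have h1 : ((‖A ^ N‖₊ : ENNReal) ^ (1 / (N:ℝ))) ^ N < c ^ N :=
      ENNReal.pow_lt_pow_left (by omega) hN2
    rwa [← ENNReal.rpow_natCast (((‖A ^ N‖₊ : ENNReal)) ^ (1 / (N:ℝ))) N,
      ← ENNReal.rpow_mul, one_div, inv_mul_cancel₀ hNne, ENNReal.rpow_one] at h1
  have key2 : (‖A ^ N‖₊ : ENNReal) < 1/2 := key.trans hN3
  have key3 : ‖A ^ N‖₊ < 1/2 := by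
    rw [show ((1:ENNReal)/2) = ((1/2 : NNReal) : ENNReal) by simp] at key2
    exact_mod_cast key2
  calc ‖A ^ N‖ = (‖A ^ N‖₊ : ℝ) := rfl
    _ < ((1/2 : NNReal) : ℝ) := by exact_mod_cast key3
    _ = 1/2 := by norm_num

theorem aux2 {A : Matrix m m ℂ} {μ : ℂ} (hμ : μ ∈ spectrum ℂ A) (N : ℕ) :
    ‖μ‖ ^ N ≤ ‖A ^ N‖ := by
  have : μ ^ N ∈ spectrum ℂ (A ^ N) := by
    have := spectrum.subset_polynomial_aeval A (Polynomial.X ^ N : Polynomial ℂ)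
    simpa using this ⟨μ, hμ, by simp⟩
  simpa using spectrum.norm_le_norm_of_mem this

theorem aux3 {B : Matrix m m ℂ} (h : ∀ μ ∈ spectrum ℂ B, ‖μ‖ < 1) :
    ∃ R : ℝ, 1 < R ∧ ∀ z : ℂ, ‖z‖ < R → IsUnit (1 - z • B) := by
  obtain ⟨z0, hz0, hz0'⟩ := spectrum.exists_nnnorm_eq_spectralRadius B
  set r : ℝ := max ‖z0‖ (1/2) with hr
  have hr0 : 0 < r := lt_of_lt_of_le (by norm_num) (le_max_right _ _)
  have hr1 : r < 1 := max_lt (h z0 hz0) (by norm_num)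
  refine ⟨r⁻¹, (one_lt_inv₀ hr0).mpr hr1, fun z hz => ?_⟩
  rcases eq_or_ne z 0 with rfl | hzne
  · simpa using isUnit_one (M := Matrix m m ℂ)
  · have hzinv : z⁻¹ ∉ spectrum ℂ B := by
      intro hmem
      have hle : (‖z⁻¹‖₊ : ENNReal) ≤ spectralRadius ℂ B :=
        le_iSup₂ (f := fun (k : ℂ) (_ : k ∈ spectrum ℂ B) => (‖k‖₊ : ENNReal)) z⁻¹ hmem
      rw [← hz0'] at hle
      have hle' : ‖z⁻¹‖ ≤ ‖z0‖ := by exact_mod_cast hle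
      have h1 : ‖z⁻¹‖ ≤ r := hle'.trans (le_max_left _ _)
      have h2 : r < ‖z⁻¹‖ := by
        rw [norm_inv]
        have hzpos : 0 < ‖z‖ := norm_pos_iff.mpr hzne
        exact (lt_inv_comm₀ hzpos hr0).mp hz
      exact absurd h1 (not_le.mpr h2)
    have hunit : IsUnit ((algebraMap ℂ (Matrix m m ℂ)) z⁻¹ - B) :=
      spectrum.notMem_iff.mp hzinv
    have heq : 1 - z • B = z • ((algebraMap ℂ (Matrix m m ℂ)) z⁻¹ - B) := by
      rw [Algebra.algebraMap_eq_smul_one, smul_sub, smul_smul, mul_inv_cancel₀ hzne, one_smul]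
    rw [heq, ← Units.smul_mk0 (α := Matrix m m ℂ) hzne]
    exact (isUnit_smul_iff (Units.mk0 z hzne) _).mpr hunit

theorem hard (k1 k2 : ℕ) (hk1 : 0 < k1) (hk2 : 0 < k2)
    (B11 : Matrix (Fin k1) (Fin k1) ℂ) (B12 : Matrix (Fin k1) (Fin k2) ℂ)
    (B21 : Matrix (Fin k2) (Fin k1) ℂ) (B22 : Matrix (Fin k2) (Fin k2) ℂ)
    (hB22 : ∀ μ ∈ spectrum ℂ B22, ‖μ‖ < 1)
    (hbdry : ∀ δ : ℂ, ‖δ‖ = 1 →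
        ∀ μ ∈ spectrum ℂ (B11 + B12 * Ring.inverse (1 - δ • B22) * (δ • B21)), ‖μ‖ < 1)
    (δ0 : ℂ) (hδ0 : ‖δ0‖ ≤ 1)
    (μ : ℂ) (hμ : μ ∈ spectrum ℂ (B11 + B12 * Ring.inverse (1 - δ0 • B22) * (δ0 • B21))) :
    ‖μ‖ < 1 := by
  haveI : Nonempty (Fin k1) := ⟨⟨0, hk1⟩⟩
  haveI : Nonempty (Fin k2) := ⟨⟨0, hk2⟩⟩
  obtain ⟨R, hR1, hRu⟩ := aux3 hB22
  set L : Matrix (Fin k2) (Fin k2) ℂ →ₗ[ℂ] Matrix (Fin k1) (Fin k1) ℂ :=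
    { toFun := fun X => B12 * X * B21,
      map_add' := by intro X Y; simp [Matrix.mul_add, Matrix.add_mul],
      map_smul' := by intro c X; simp [Matrix.mul_smul, Matrix.smul_mul] } with hL
  set Nf : ℂ → Matrix (Fin k1) (Fin k1) ℂ :=
    fun z => B11 + z • L (Ring.inverse (1 - z • B22)) with hNf
  have hNfeq : ∀ z : ℂ, B11 + B12 * Ring.inverse (1 - z • B22) * (z • B21) = Nf z := by
    intro z
    simp only [hNf, hL, LinearMap.coe_mk, AddHom.coe_mk, Matrix.mul_smul]
  rw [hNfeq] at hμ
  simp only [hNfeq] at hbdry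
  have hdiff : DifferentiableOn ℂ Nf (Metric.ball 0 R) := by
    intro z hz
    have hz' : ‖z‖ < R := by simpa using hz
    have h1 : DifferentiableAt ℂ (fun z : ℂ => 1 - z • B22) z :=
      (differentiableAt_const _).sub (differentiableAt_id.smul_const _)
    have h2 : DifferentiableAt ℂ (fun z : ℂ => Ring.inverse (1 - z • B22)) z :=
      h1.inverse (hRu z hz')
    have h3 : DifferentiableAt ℂ (fun z : ℂ => L (Ring.inverse (1 - z • B22))) z :=
      (L.toContinuousLinearMap.differentiableAt).comp z h2
    exact ((differentiableAt_const B11).add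
      (differentiableAt_id.smul h3)).differentiableWithinAt
  have hdiffAt : ∀ z : ℂ, ‖z‖ ≤ 1 → DifferentiableAt ℂ Nf z := by
    intro z hz
    exact hdiff.differentiableAt (Metric.isOpen_ball.mem_nhds
      (by simpa using lt_of_le_of_lt hz hR1))
  have key : ∀ z : ℂ, ∃ n : ℕ, 1 ≤ n ∧
      (z ∈ Metric.sphere (0:ℂ) 1 → {w : ℂ | ‖Nf w ^ n‖ < 1/2} ∈ nhds z) := by
    intro z
    by_cases hz : z ∈ Metric.sphere (0:ℂ) 1
    · have hz1 : ‖z‖ = 1 := by simpa using hz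
      obtain ⟨n, hn1, hn2⟩ := aux1 (hbdry z hz1)
      refine ⟨n, hn1, fun _ => ?_⟩
      have hc : ContinuousAt (fun w => ‖Nf w ^ n‖) z :=
        (((hdiffAt z hz1.le).pow n).continuousAt).norm
      exact hc (Iio_mem_nhds hn2)
    · exact ⟨1, le_refl 1, fun h => absurd h hz⟩
  choose nn hnn1 hnn2 using key
  obtain ⟨t, hts, htc⟩ := (isCompact_sphere (0:ℂ) 1).elim_nhds_subcover
    (fun z => {w : ℂ | ‖Nf w ^ nn z‖ < 1/2}) (fun z hz => hnn2 z hz)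
  set P : ℕ := ∏ z ∈ t, nn z with hP
  have hP1 : 1 ≤ P := Finset.one_le_prod' (fun z _ => hnn1 z)
  have hball : ∀ z ∈ Metric.sphere (0:ℂ) 1, ‖Nf z ^ P‖ ≤ 1/2 := by
    intro z hz
    obtain ⟨y, hyt, hyz⟩ := Set.mem_iUnion₂.mp (htc hz)
    have hyz' : ‖Nf z ^ nn y‖ < 1/2 := hyz
    have hdvd : nn y ∣ P := Finset.dvd_prod_of_mem nn hyt
    have hk : nn y * (P / nn y) = P := Nat.mul_div_cancel' hdvd
    have hkpos : 1 ≤ P / nn y := by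
      rcases Nat.eq_zero_or_pos (P / nn y) with h0 | h
      · rw [h0, Nat.mul_zero] at hk; omega
      · exact h
    calc ‖Nf z ^ P‖ = ‖(Nf z ^ nn y) ^ (P / nn y)‖ := by rw [← pow_mul, hk]
      _ ≤ ‖Nf z ^ nn y‖ ^ (P / nn y) := norm_pow_le' _ (by omega)
      _ ≤ (1/2 : ℝ) ^ (P / nn y) := pow_le_pow_left₀ (norm_nonneg _) hyz'.le _
      _ ≤ (1/2 : ℝ) ^ 1 := pow_le_pow_of_le_one (by norm_num) (by norm_num) hkpos
      _ = 1/2 := pow_one _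
  have hdiffP : DifferentiableOn ℂ (fun z => Nf z ^ P) (Metric.ball 0 R) :=
    fun z hz => ((hdiff z hz).pow P)
  have hdcc : DiffContOnCl ℂ (fun z => Nf z ^ P) (Metric.ball 0 1) := by
    refine ⟨hdiffP.mono (Metric.ball_subset_ball hR1.le), ?_⟩
    rw [closure_ball (0:ℂ) one_ne_zero]
    exact hdiffP.continuousOn.mono (Metric.closedBall_subset_ball hR1)
  have hmax : ‖Nf δ0 ^ P‖ ≤ 1/2 := by
    refine Complex.norm_le_of_forall_mem_frontier_norm_le Metric.isBounded_ball hdcc ?_ ?_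
    · intro z hz
      rw [frontier_ball (0:ℂ) one_ne_zero] at hz
      exact hball z hz
    · rw [closure_ball (0:ℂ) one_ne_zero]
      exact mem_closedBall_zero_iff.mpr hδ0
  by_contra hcon
  push_neg at hcon
  have h1 : (1:ℝ) ≤ ‖μ‖ ^ P := by
    calc (1:ℝ) = 1 ^ P := (one_pow P).symm
      _ ≤ ‖μ‖ ^ P := pow_le_pow_left₀ (by norm_num) hcon P
  have h2 : ‖μ‖ ^ P ≤ ‖Nf δ0 ^ P‖ := aux2 hμ P
  linarith

end aux

/-- with `A22` Schur stable and
`M(δ) = A11 + A12 (I − δ A22)⁻¹ δ A21`, Schur stability of `M(δ)` on the unit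
circle is equivalent to Schur stability on the whole closed unit disc. -/
theorem stmt9 (k1 k2 : ℕ) (hk1 : 0 < k1) (hk2 : 0 < k2)
    (A11 : Matrix (Fin k1) (Fin k1) ℝ) (A12 : Matrix (Fin k1) (Fin k2) ℝ)
    (A21 : Matrix (Fin k2) (Fin k1) ℝ) (A22 : Matrix (Fin k2) (Fin k2) ℝ)
    (hA22 : ∀ μ ∈ spectrum ℂ (A22.map (Complex.ofReal)), ‖μ‖ < 1)
    (M : ℂ → Matrix (Fin k1) (Fin k1) ℂ)
    (hM : ∀ δ : ℂ, ‖δ‖ ≤ 1 →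
      M δ = A11.map (Complex.ofReal) +
        A12.map (Complex.ofReal) *
          (1 - δ • A22.map (Complex.ofReal))⁻¹ * (δ • A21.map (Complex.ofReal))) :
    (∀ δ : ℂ, ‖δ‖ = 1 → ∀ μ ∈ spectrum ℂ (M δ), ‖μ‖ < 1) ↔
    (∀ δ : ℂ, ‖δ‖ ≤ 1 → ∀ μ ∈ spectrum ℂ (M δ), ‖μ‖ < 1) := by
  constructor
  · intro hb δ hδ μ hμ
    rw [hM δ hδ, Matrix.nonsing_inv_eq_ringInverse] at hμ
    refine hard k1 k2 hk1 hk2 _ _ _ _ hA22 ?_ δ hδ μ hμ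
    intro δ' hδ' μ' hμ'
    refine hb δ' hδ' μ' ?_
    rw [hM δ' hδ'.le, Matrix.nonsing_inv_eq_ringInverse]
    exact hμ'
  · intro h δ hδ; exact h δ hδ.le
end

section
/- Let n ≥ 2, fix positive integers k_1, …, k_n and real matrices A_{ij} ∈ ℝ^{k_i×k_j} for i, j ∈ {1, …, n}. Let A_M = [A_{ij}]_{2≤i,j≤n} (an s×s real matrix with s = k_2 + … + k_n), B_M = [A_{21}; …; A_{n1}] ∈ ℝ^{s×k_1}, C_M = [A_{12}, …, A_{1n}] ∈ ℝ^{k_1×s}, D_M = A_{11}. For δ = (δ_2, …, δ_n) ∈ ℂ^{n−1} let Δ̃(δ) = diag(δ_2 I_{k_2}, …, δ_n I_{k_n}), and assume that I − Δ̃(δ) A_M is invertible for every δ in the torus T = { δ ∈ ℂ^{n−1} : |δ_i| = 1 for all i }; for such δ set M(δ) = D_M + C_M (I − Δ̃(δ) A_M)^{-1} Δ̃(δ) B_M ∈ ℂ^{k_1×k_1}. Suppose that for every δ ∈ T there exists a Hermitian positive definite matrix P(δ) ∈ ℂ^{k_1×k_1} with M(δ)* P(δ) M(δ) − P(δ) negative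 definite. Then there exist nonnegative integers g_2, …, g_n with N = g_2 + … + g_n and complex matrices A^•, E^• ∈ ℂ^{N×N}, B^•, F^• ∈ ℂ^{N×k_1}, C^• ∈ ℂ^{k_1×N}, D^• ∈ ℂ^{k_1×k_1} such that, writing Δ̂(δ) = diag(δ_2 I_{g_2}, …, δ_n I_{g_n}): (a) E^• − Δ̂(δ) A^• is invertible for every δ ∈ T, and (b) for every δ ∈ T the matrix P^•(δ) = D^• + C^• (E^• − Δ̂(δ) A^•)^{-1} (Δ̂(δ) B^• − F^•) is Hermitian positive definite and satisfies that M(δ)* P^•(δ) M(δ) − P^•(δ) is negative definite. -/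
open Matrix
open scoped ComplexOrder

namespace Stmt12Aux
set_option linter.unusedSectionVars false
set_option linter.unusedVariables false
set_option maxHeartbeats 1000000

section VecMat
variable {K : Type} [fK : Fintype K] [DecidableEq K]

noncomputable def vsq (x : K → ℂ) : ℝ := ∑ i, Complex.normSq (x i)

noncomputable def fsq {J : Type} [Fintype J] (A : Matrix J K ℂ) : ℝ :=
  ∑ i, ∑ j, Complex.normSq (A i j)

lemma vsq_nonneg (x : K → ℂ) : 0 ≤ vsq x :=
  Finset.sum_nonneg fun i _ => Complex.normSq_nonneg _

lemma fsq_nonneg {J : Type} [Fintype J] (A : Matrix J K ℂ) : 0 ≤ fsq A :=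
  Finset.sum_nonneg fun i _ => Finset.sum_nonneg fun j _ => Complex.normSq_nonneg _

lemma vsq_pos {x : K → ℂ} (hx : x ≠ 0) : 0 < vsq x := by
  obtain ⟨i, hi⟩ : ∃ i, x i ≠ 0 := by
    by_contra h; push_neg at h; exact hx (funext h)
  have : 0 < Complex.normSq (x i) := Complex.normSq_pos.2 hi
  exact Finset.sum_pos' (fun j _ => Complex.normSq_nonneg _) ⟨i, Finset.mem_univ i, this⟩

lemma dot_star_self (y : K → ℂ) : star y ⬝ᵥ y = ((vsq y : ℝ) : ℂ) := by
  simp only [dotProduct, vsq, Pi.star_apply, Complex.ofReal_sum]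
  refine Finset.sum_congr rfl fun i _ => ?_
  simp [Complex.star_def, Complex.normSq_eq_conj_mul_self]

lemma vsq_mulVec_le {J : Type} [Fintype J] (A : Matrix J K ℂ) (x : K → ℂ) :
    vsq (A *ᵥ x) ≤ fsq A * vsq x := by
  rw [fsq, Finset.sum_mul]
  refine Finset.sum_le_sum fun i _ => ?_
  have habs : ‖(A *ᵥ x) i‖ ≤ ∑ j, ‖A i j‖ * ‖x j‖ := by
    rw [Matrix.mulVec, dotProduct]
    refine le_trans (norm_sum_le _ _) (le_of_eq ?_)
    exact Finset.sum_congr rfl fun j _ => norm_mul _ _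
  have h1 : Complex.normSq ((A *ᵥ x) i) ≤ (∑ j, ‖A i j‖ * ‖x j‖) ^ 2 := by
    rw [Complex.normSq_eq_norm_sq]
    exact pow_le_pow_left₀ (norm_nonneg _) habs 2
  refine h1.trans ?_
  refine (Finset.sum_mul_sq_le_sq_mul_sq Finset.univ _ _).trans (le_of_eq ?_)
  rw [vsq]
  congr 1 <;> exact Finset.sum_congr rfl fun j _ => (Complex.normSq_eq_norm_sq _).symm

lemma fsq_mul_le {J L : Type} [Fintype J] [Fintype L] [DecidableEq L] (A : Matrix J L ℂ) (B : Matrix L K ℂ) :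
    fsq (A * B) ≤ fsq A * fsq B := by
  have h1 : fsq (A * B) = ∑ j, vsq (A *ᵥ fun l => B l j) := by
    rw [fsq, Finset.sum_comm]
    refine Finset.sum_congr rfl fun j _ => Finset.sum_congr rfl fun i _ => ?_
    simp [Matrix.mulVec, dotProduct, Matrix.mul_apply]
  have h2 : fsq B = ∑ j, vsq fun l => B l j := by
    rw [fsq, Finset.sum_comm]; rfl
  rw [h1, h2, Finset.mul_sum]
  exact Finset.sum_le_sum fun j _ => vsq_mulVec_le A _

lemma fsq_pow_le (A : Matrix K K ℂ) {m : ℕ} (hm : 1 ≤ m) : fsq (A ^ m) ≤ fsq A ^ m := by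
  induction m with
  | zero => omega
  | succ m ih =>
    rcases Nat.eq_or_lt_of_le hm with h | h
    · rw [← h, pow_one, pow_one]
    · have hm1 : 1 ≤ m := by omega
      calc fsq (A ^ (m + 1)) = fsq (A ^ m * A) := by rw [pow_succ]
        _ ≤ fsq (A ^ m) * fsq A := fsq_mul_le _ _
        _ ≤ fsq A ^ m * fsq A := by
            exact mul_le_mul_of_nonneg_right (ih hm1) (fsq_nonneg A)
        _ = fsq A ^ (m + 1) := by rw [pow_succ]

-- quadratic form shorthand
noncomputable def qf (P : Matrix K K ℂ) (x : K → ℂ) : ℝ := (star x ⬝ᵥ P *ᵥ x).re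

lemma qf_sandwich (M P : Matrix K K ℂ) (x : K → ℂ) :
    qf (Mᴴ * P * M) x = qf P (M *ᵥ x) := by
  unfold qf
  rw [mul_assoc, ← Matrix.mulVec_mulVec,
    Matrix.dotProduct_mulVec, ← Matrix.star_mulVec, ← Matrix.mulVec_mulVec]

lemma qf_abs_le (P : Matrix K K ℂ) (x : K → ℂ) :
    qf P x ≤ Real.sqrt (fsq P) * vsq x := by
  have h0 : ‖star x ⬝ᵥ P *ᵥ x‖ ≤
      ∑ i, ∑ j, ‖P i j‖ * (‖x i‖ * ‖x j‖) := by
    rw [dotProduct]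
    refine le_trans (norm_sum_le _ _) (Finset.sum_le_sum fun i _ => ?_)
    rw [Matrix.mulVec, dotProduct, Finset.mul_sum]
    refine le_trans (norm_sum_le _ _) (Finset.sum_le_sum fun j _ => ?_)
    simp only [Pi.star_apply, Complex.star_def, norm_mul, Complex.norm_conj]
    exact le_of_eq (by ring)
  have h1 : (∑ i, ∑ j, ‖P i j‖ * (‖x i‖ * ‖x j‖)) ^ 2 ≤
      fsq P * (vsq x * vsq x) := by
    have := Finset.sum_mul_sq_le_sq_mul_sq Finset.univ
      (fun p : K × K => ‖P p.1 p.2‖)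
      (fun p : K × K => ‖x p.1‖ * ‖x p.2‖)
    have e1 : (∑ i, ∑ j, ‖P i j‖ * (‖x i‖ * ‖x j‖))
        = ∑ p : K × K, ‖P p.1 p.2‖ * (‖x p.1‖ * ‖x p.2‖) := by
      rw [Fintype.sum_prod_type]
    have e2 : fsq P = ∑ p : K × K, ‖P p.1 p.2‖ ^ 2 := by
      rw [fsq, Fintype.sum_prod_type]
      exact Finset.sum_congr rfl fun i _ => Finset.sum_congr rfl fun j _ => by
        rw [Complex.normSq_eq_norm_sq]
    have e3 : vsq x * vsq x = ∑ p : K × K, (‖x p.1‖ * ‖x p.2‖) ^ 2 := by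
      rw [vsq, Finset.sum_mul_sum, Fintype.sum_prod_type]
      exact Finset.sum_congr rfl fun i _ => Finset.sum_congr rfl fun j _ => by
        rw [mul_pow, Complex.normSq_eq_norm_sq, Complex.normSq_eq_norm_sq]
    rw [e1, e2, e3]
    exact this
  have h2 : qf P x ≤ ‖star x ⬝ᵥ P *ᵥ x‖ := Complex.re_le_norm _
  refine h2.trans (h0.trans ?_)
  have hnn : 0 ≤ ∑ i, ∑ j, ‖P i j‖ * (‖x i‖ * ‖x j‖) :=
    Finset.sum_nonneg fun i _ => Finset.sum_nonneg fun j _ => by positivity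
  have := Real.sqrt_le_sqrt h1
  rw [Real.sqrt_sq hnn, Real.sqrt_mul (fsq_nonneg P), Real.sqrt_mul_self (vsq_nonneg x)] at this
  exact this

open scoped MatrixOrder in
lemma exists_lower [Nonempty K] {Q : Matrix K K ℂ} (hQ : Q.PosDef) :
    ∃ ε : ℝ, 0 < ε ∧ ∀ x, ε * vsq x ≤ qf Q x := by
  set R := CFC.sqrt Q with hR
  have hherm : Rᴴ = R := (Matrix.nonneg_iff_posSemidef.mp (CFC.sqrt_nonneg Q)).isHermitian
  have hRR : R * R = Q := CFC.sqrt_mul_sqrt_self Q hQ.posSemidef.nonneg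
  have hkey : ∀ x, qf Q x = vsq (R *ᵥ x) := by
    intro x
    unfold qf
    rw [← hRR, ← Matrix.mulVec_mulVec, Matrix.dotProduct_mulVec]
    nth_rewrite 1 [← hherm]
    rw [← Matrix.star_mulVec, dot_star_self, Complex.ofReal_re]
  have hdet : IsUnit R.det := by
    rw [isUnit_iff_ne_zero]
    intro h
    have : Q.det = R.det * R.det := by rw [← hRR, Matrix.det_mul]
    rw [h, mul_zero] at this
    exact hQ.det_pos.ne' this
  have hSR : R⁻¹ * R = 1 := Matrix.nonsing_inv_mul R hdet
  have hS0 : fsq R⁻¹ ≠ 0 := by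
    intro h
    have hz : R⁻¹ = 0 := by
      ext i j
      have hrow := (Finset.sum_eq_zero_iff_of_nonneg
        (fun p _ => Finset.sum_nonneg fun q _ => Complex.normSq_nonneg _)).mp h i
        (Finset.mem_univ i)
      have hentry := (Finset.sum_eq_zero_iff_of_nonneg
        (fun q _ => Complex.normSq_nonneg _)).mp hrow j (Finset.mem_univ j)
      simpa using (Complex.normSq_eq_zero.mp hentry)
    have h1 : (1 : Matrix K K ℂ) = 0 := by rw [← hSR, hz, Matrix.zero_mul]
    obtain ⟨i⟩ := ‹Nonempty K›
    have h2 := congrFun (congrFun h1 i) i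
    rw [Matrix.one_apply_eq] at h2
    exact one_ne_zero h2
  have hSpos : 0 < fsq R⁻¹ := lt_of_le_of_ne (fsq_nonneg _) (Ne.symm hS0)
  refine ⟨(fsq R⁻¹)⁻¹, by positivity, fun x => ?_⟩
  have h1 : vsq x ≤ fsq R⁻¹ * vsq (R *ᵥ x) := by
    have : x = R⁻¹ *ᵥ (R *ᵥ x) := by rw [Matrix.mulVec_mulVec, hSR, Matrix.one_mulVec]
    calc vsq x = vsq (R⁻¹ *ᵥ (R *ᵥ x)) := by rw [← this]
      _ ≤ fsq R⁻¹ * vsq (R *ᵥ x) := vsq_mulVec_le _ _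
  rw [hkey, inv_mul_le_iff₀ hSpos]
  exact h1

lemma qf_sub (P₁ P₂ : Matrix K K ℂ) (x : K → ℂ) : qf (P₁ - P₂) x = qf P₁ x - qf P₂ x := by
  unfold qf
  rw [Matrix.sub_mulVec, dotProduct_sub, Complex.sub_re]

lemma pow_small [Nonempty K] (M P : Matrix K K ℂ) (hP : P.PosDef)
    (hQ : (-(Mᴴ * P * M - P)).PosDef) : ∃ m : ℕ, 1 ≤ m ∧ fsq (M ^ m) < 1 / 2 := by
  have hQ' : (P - Mᴴ * P * M).PosDef := by rwa [neg_sub] at hQ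
  obtain ⟨ε, hε, hεQ⟩ := exists_lower hQ'
  obtain ⟨μ, hμ, hμP⟩ := exists_lower hP
  set Λ : ℝ := Real.sqrt (fsq P) + 1 with hΛ
  have hΛpos : 0 < Λ := by positivity
  have hPle : ∀ x, qf P x ≤ Λ * vsq x := by
    intro x
    refine (qf_abs_le P x).trans ?_
    have := vsq_nonneg x
    nlinarith [Real.sqrt_nonneg (fsq P)]
  set c : ℝ := 1 - ε / Λ with hc
  have hstep : ∀ x, qf P (M *ᵥ x) ≤ c * qf P x := by
    intro x
    have h1 : qf P (M *ᵥ x) = qf P x - qf (P - Mᴴ * P * M) x := by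
      rw [qf_sub, ← qf_sandwich]; ring
    have h2 : ε * vsq x ≤ qf (P - Mᴴ * P * M) x := hεQ x
    have h3 : qf P x ≤ Λ * vsq x := hPle x
    have h4 : (ε / Λ) * qf P x ≤ ε * vsq x := by
      rw [div_mul_eq_mul_div, div_le_iff₀ hΛpos]
      calc ε * qf P x ≤ ε * (Λ * vsq x) := by
            exact mul_le_mul_of_nonneg_left h3 hε.le
        _ = ε * vsq x * Λ := by ring
    rw [h1, hc]; linarith
  have hc0 : 0 ≤ c := by
    obtain ⟨j⟩ := ‹Nonempty K›
    set x₀ : K → ℂ := Pi.single j 1 with hx₀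
    have hx₀ne : x₀ ≠ 0 := by
      intro h
      have := congrFun h j
      simp [hx₀] at this
    have hvx₀ : vsq x₀ = 1 := by
      rw [vsq, hx₀]
      rw [Finset.sum_eq_single j]
      · simp
      · intro b _ hb; simp [Pi.single_apply, hb]
      · intro h; exact absurd (Finset.mem_univ j) h
    have hMPM : (0:ℝ) ≤ qf (Mᴴ * P * M) x₀ := by
      rw [qf_sandwich]
      by_cases h : M *ᵥ x₀ = 0
      · rw [h]; unfold qf; simp [Matrix.mulVec_zero]
      · exact (hP.re_dotProduct_pos h).le
    have h5 : ε ≤ qf (P - Mᴴ * P * M) x₀ + qf (Mᴴ * P * M) x₀ := by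
      have := hεQ x₀; rw [hvx₀] at this; linarith
    have h6 : qf (P - Mᴴ * P * M) x₀ + qf (Mᴴ * P * M) x₀ = qf P x₀ := by
      rw [qf_sub]; ring
    have h7 : qf P x₀ ≤ Λ := by
      have := hPle x₀; rw [hvx₀] at this; linarith
    have hεΛ : ε ≤ Λ := by linarith
    rw [hc]
    have : ε / Λ ≤ 1 := by rw [div_le_one hΛpos]; exact hεΛ
    linarith
  have hc1 : c < 1 := by
    rw [hc]
    have : 0 < ε / Λ := div_pos hε hΛpos
    linarith
  have hiter : ∀ (m : ℕ) (x : K → ℂ), qf P ((M ^ m) *ᵥ x) ≤ c ^ m * qf P x := by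
    intro m
    induction m with
    | zero => intro x; simp [pow_zero, Matrix.one_mulVec]
    | succ m ih =>
      intro x
      have h1 : (M ^ (m + 1)) *ᵥ x = M *ᵥ ((M ^ m) *ᵥ x) := by
        rw [Matrix.mulVec_mulVec, ← pow_succ']
      rw [h1]
      calc qf P (M *ᵥ ((M ^ m) *ᵥ x)) ≤ c * qf P ((M ^ m) *ᵥ x) := hstep _
        _ ≤ c * (c ^ m * qf P x) := by
            exact mul_le_mul_of_nonneg_left (ih x) hc0
        _ = c ^ (m + 1) * qf P x := by ring
  have hvs : ∀ (m : ℕ) (x : K → ℂ), vsq ((M ^ m) *ᵥ x) ≤ c ^ m * (Λ / μ) * vsq x := by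
    intro m x
    have h1 : μ * vsq ((M ^ m) *ᵥ x) ≤ qf P ((M ^ m) *ᵥ x) := hμP _
    have h2 : qf P ((M ^ m) *ᵥ x) ≤ c ^ m * qf P x := hiter m x
    have h3 : qf P x ≤ Λ * vsq x := hPle x
    have hcm : (0:ℝ) ≤ c ^ m := pow_nonneg hc0 m
    rw [← mul_le_mul_iff_right₀ hμ]
    calc μ * vsq ((M ^ m) *ᵥ x) ≤ c ^ m * (Λ * vsq x) := by nlinarith
      _ = μ * (c ^ m * (Λ / μ) * vsq x) := by field_simp
  have hfsq : ∀ m : ℕ, fsq (M ^ m) ≤ (Fintype.card K) * (Λ / μ) * c ^ m := by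
    intro m
    have hcol : ∀ j : K, (∑ i, Complex.normSq ((M ^ m) i j)) ≤ c ^ m * (Λ / μ) := by
      intro j
      have h1 := hvs m (Pi.single j 1)
      have hv1 : vsq (Pi.single j 1 : K → ℂ) = 1 := by
        rw [vsq]
        rw [Finset.sum_eq_single j]
        · simp
        · intro b _ hb; simp [Pi.single_apply, hb]
        · intro h; exact absurd (Finset.mem_univ j) h
      have h2 : (M ^ m) *ᵥ Pi.single j 1 = fun i => (M ^ m) i j := by
        rw [Matrix.mulVec_single]; simp; rfl
      rw [hv1, mul_one, h2] at h1
      exact h1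
    calc fsq (M ^ m) = ∑ j, ∑ i, Complex.normSq ((M ^ m) i j) := by
          rw [fsq, Finset.sum_comm]
      _ ≤ ∑ _j : K, c ^ m * (Λ / μ) := Finset.sum_le_sum fun j _ => hcol j
      _ = (Fintype.card K) * (Λ / μ) * c ^ m := by
          rw [Finset.sum_const, Finset.card_univ, nsmul_eq_mul]; ring
  have htend : Filter.Tendsto (fun m : ℕ => (Fintype.card K : ℝ) * (Λ / μ) * c ^ m)
      Filter.atTop (nhds 0) := by
    have := tendsto_pow_atTop_nhds_zero_of_lt_one hc0 hc1
    simpa using this.const_mul ((Fintype.card K : ℝ) * (Λ / μ))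
  have hev : ∀ᶠ m : ℕ in Filter.atTop,
      (Fintype.card K : ℝ) * (Λ / μ) * c ^ m < 1 / 2 :=
    htend.eventually_lt_const (by norm_num)
  obtain ⟨m, hm1, hm2⟩ := (hev.and (Filter.eventually_ge_atTop 1)).exists
  exact ⟨m, hm2, lt_of_le_of_lt (hfsq m) hm1⟩

lemma continuous_fsq : Continuous fun A : Matrix K K ℂ => fsq A := by
  unfold fsq
  refine continuous_finset_sum _ fun i _ => continuous_finset_sum _ fun j _ => ?_
  exact Complex.continuous_normSq.comp ((continuous_apply j).comp (continuous_apply i))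

lemma exists_T {ι : Type} [Fintype ι] (Mc : (ι → ℂ) → Matrix K K ℂ)
    (W : Set (ι → ℂ)) (hW : IsOpen W)
    (hSW : {δ : ι → ℂ | ∀ i, ‖δ i‖ = 1} ⊆ W)
    (hcont : ContinuousOn Mc W)
    (hsmall : ∀ δ ∈ {δ : ι → ℂ | ∀ i, ‖δ i‖ = 1}, ∃ m : ℕ, 1 ≤ m ∧ fsq (Mc δ ^ m) < 1 / 2) :
    ∃ T : ℕ, 1 ≤ T ∧ ∀ δ ∈ {δ : ι → ℂ | ∀ i, ‖δ i‖ = 1}, fsq (Mc δ ^ T) < 1 := by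
  set S : Set (ι → ℂ) := {δ | ∀ i, ‖δ i‖ = 1} with hSdef
  have hScompact : IsCompact S := by
    have : S = Set.pi Set.univ (fun _ : ι => Metric.sphere (0 : ℂ) 1) := by
      ext δ
      simp [hSdef, Set.mem_pi, mem_sphere_iff_norm, sub_zero]
    rw [this]
    exact isCompact_univ_pi fun i => isCompact_sphere 0 1
  classical
  choose m hm1 hm2 using hsmall
  set U : S → Set (ι → ℂ) := fun δ₀ =>
    W ∩ (fun δ => fsq (Mc δ ^ m δ₀.1 δ₀.2)) ⁻¹' (Set.Iio (1 / 2)) with hU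
  have hUopen : ∀ δ₀ : S, IsOpen (U δ₀) := by
    intro δ₀
    refine ContinuousOn.isOpen_inter_preimage ?_ hW isOpen_Iio
    exact continuous_fsq.comp_continuousOn (hcont.pow _)
  have hcover : S ⊆ ⋃ δ₀ : S, U δ₀ := by
    intro δ hδ
    refine Set.mem_iUnion.2 ⟨⟨δ, hδ⟩, hSW hδ, ?_⟩
    exact hm2 δ hδ
  obtain ⟨t, ht⟩ := hScompact.elim_finite_subcover U hUopen hcover
  refine ⟨∏ δ₀ ∈ t, m δ₀.1 δ₀.2, Finset.one_le_prod' fun δ₀ _ => hm1 δ₀.1 δ₀.2, ?_⟩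
  intro δ hδ
  obtain ⟨δ₀, hδ₀t, hδU⟩ : ∃ δ₀ ∈ t, δ ∈ U δ₀ := by
    have := ht hδ
    simpa [Set.mem_iUnion] using this
  set T := ∏ δ₀ ∈ t, m δ₀.1 δ₀.2 with hT
  have hdvd : m δ₀.1 δ₀.2 ∣ T := Finset.dvd_prod_of_mem _ hδ₀t
  obtain ⟨r, hr⟩ := hdvd
  have hr1 : 1 ≤ r := by
    rcases Nat.eq_zero_or_pos r with h | h
    · exfalso
      have hT1 : 1 ≤ T := Finset.one_le_prod' fun δ₀ _ => hm1 δ₀.1 δ₀.2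
      rw [hr, h, mul_zero] at hT1; omega
    · omega
  have hlt : fsq (Mc δ ^ m δ₀.1 δ₀.2) < 1 / 2 := hδU.2
  have hnn := fsq_nonneg (Mc δ ^ m δ₀.1 δ₀.2)
  calc fsq (Mc δ ^ T) = fsq ((Mc δ ^ m δ₀.1 δ₀.2) ^ r) := by rw [hr, pow_mul]
    _ ≤ fsq (Mc δ ^ m δ₀.1 δ₀.2) ^ r := fsq_pow_le _ hr1
    _ ≤ (1 / 2 : ℝ) ^ r := by
        exact pow_le_pow_left₀ hnn hlt.le r
    _ ≤ (1 / 2 : ℝ) ^ 1 := by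
        exact pow_le_pow_of_le_one (by norm_num) (by norm_num) hr1
    _ < 1 := by norm_num

end VecMat

section Rep
variable {ι : Type} [Fintype ι] [DecidableEq ι] {K : Type} [Fintype K] [DecidableEq K]

/-- ILFR-representability on the torus, with a free finite index type. -/
def RepOn (F : (ι → ℂ) → Matrix K K ℂ) : Prop :=
  ∃ (m : Type) (_ : Fintype m) (_ : DecidableEq m) (π : m → ι)
    (A' E' : Matrix m m ℂ) (B' F' : Matrix m K ℂ) (C' : Matrix K m ℂ) (D' : Matrix K K ℂ),
    ∀ δ : ι → ℂ, (∀ i, ‖δ i‖ = 1) →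
      ∃ G : Matrix m m ℂ,
        (E' - Matrix.diagonal (fun x => δ (π x)) * A') * G = 1 ∧
        G * (E' - Matrix.diagonal (fun x => δ (π x)) * A') = 1 ∧
        F δ = D' + C' * G * (Matrix.diagonal (fun x => δ (π x)) * B' - F')

lemma fromBlocks_sub {m₁ m₂ n₁ n₂ : Type}
    (A : Matrix n₁ m₁ ℂ) (B : Matrix n₁ m₂ ℂ) (C : Matrix n₂ m₁ ℂ) (D : Matrix n₂ m₂ ℂ)
    (A' : Matrix n₁ m₁ ℂ) (B' : Matrix n₁ m₂ ℂ) (C' : Matrix n₂ m₁ ℂ) (D' : Matrix n₂ m₂ ℂ) :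
    fromBlocks A B C D - fromBlocks A' B' C' D' =
      fromBlocks (A - A') (B - B') (C - C') (D - D') := by
  rw [sub_eq_add_neg, Matrix.fromBlocks_neg, Matrix.fromBlocks_add]
  simp [sub_eq_add_neg]

lemma fromRows_sub {m₁ m₂ : Type} (A : Matrix m₁ K ℂ) (B : Matrix m₂ K ℂ)
    (A' : Matrix m₁ K ℂ) (B' : Matrix m₂ K ℂ) :
    fromRows A B - fromRows A' B' = fromRows (A - A') (B - B') := by
  ext i j; cases i <;> simp [Matrix.fromRows_apply_inl, Matrix.fromRows_apply_inr]

lemma diagonal_sumElim {m₁ m₂ : Type} [DecidableEq m₁] [DecidableEq m₂]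
    (d₁ : m₁ → ℂ) (d₂ : m₂ → ℂ) :
    Matrix.diagonal (Sum.elim d₁ d₂) =
      fromBlocks (Matrix.diagonal d₁) 0 0 (Matrix.diagonal d₂) := by
  ext i j
  cases i <;> cases j <;>
    simp [Matrix.diagonal_apply, Matrix.fromBlocks, Sum.elim] <;>
    aesop

lemma repOn_const (D : Matrix K K ℂ) : RepOn (fun _ : ι → ℂ => D) := by
  refine ⟨Empty, inferInstance, inferInstance, fun x => x.elim, 0, 0, 0, 0, 0, D,
    fun δ hδ => ⟨0, ?_, ?_, ?_⟩⟩
  · ext i j; exact i.elim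
  · ext i j; exact i.elim
  · simp

lemma repOn_add {F₁ F₂ : (ι → ℂ) → Matrix K K ℂ} (h₁ : RepOn F₁) (h₂ : RepOn F₂) :
    RepOn (fun δ => F₁ δ + F₂ δ) := by
  obtain ⟨m₁, fm₁, dm₁, π₁, A₁, E₁, B₁, Ft₁, C₁, D₁, h₁⟩ := h₁
  obtain ⟨m₂, fm₂, dm₂, π₂, A₂, E₂, B₂, Ft₂, C₂, D₂, h₂⟩ := h₂
  refine ⟨m₁ ⊕ m₂, inferInstance, inferInstance, Sum.elim π₁ π₂,
    fromBlocks A₁ 0 0 A₂, fromBlocks E₁ 0 0 E₂, fromRows B₁ B₂, fromRows Ft₁ Ft₂,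
    fromCols C₁ C₂, D₁ + D₂, fun δ hδ => ?_⟩
  obtain ⟨G₁, hG₁l, hG₁r, hv₁⟩ := h₁ δ hδ
  obtain ⟨G₂, hG₂l, hG₂r, hv₂⟩ := h₂ δ hδ
  set Δ₁ := Matrix.diagonal (fun x => δ (π₁ x)) with hΔ₁
  set Δ₂ := Matrix.diagonal (fun x => δ (π₂ x)) with hΔ₂
  have hdiag : Matrix.diagonal (fun x : m₁ ⊕ m₂ => δ (Sum.elim π₁ π₂ x)) =
      fromBlocks Δ₁ 0 0 Δ₂ := by
    rw [hΔ₁, hΔ₂, ← diagonal_sumElim]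
    congr 1
    funext x; cases x <;> rfl
  have hX : fromBlocks E₁ 0 0 E₂ -
      Matrix.diagonal (fun x : m₁ ⊕ m₂ => δ (Sum.elim π₁ π₂ x)) * fromBlocks A₁ 0 0 A₂ =
      fromBlocks (E₁ - Δ₁ * A₁) 0 0 (E₂ - Δ₂ * A₂) := by
    rw [hdiag, Matrix.fromBlocks_multiply, fromBlocks_sub]
    simp
  refine ⟨fromBlocks G₁ 0 0 G₂, ?_, ?_, ?_⟩
  · rw [hX, Matrix.fromBlocks_multiply]
    simp only [Matrix.mul_zero, Matrix.zero_mul, add_zero, zero_add, hG₁l, hG₂l]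
    exact Matrix.fromBlocks_one
  · rw [hX, Matrix.fromBlocks_multiply]
    simp only [Matrix.mul_zero, Matrix.zero_mul, add_zero, zero_add, hG₁r, hG₂r]
    exact Matrix.fromBlocks_one
  · rw [hdiag, Matrix.fromBlocks_mul_fromRows, fromRows_sub,
      Matrix.fromCols_mul_fromBlocks, Matrix.fromCols_mul_fromRows]
    simp only [Matrix.mul_zero, Matrix.zero_mul, add_zero, zero_add]
    rw [hv₁, hv₂]
    abel

lemma repOn_mul {F₁ F₂ : (ι → ℂ) → Matrix K K ℂ} (h₁ : RepOn F₁) (h₂ : RepOn F₂) :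
    RepOn (fun δ => F₁ δ * F₂ δ) := by
  obtain ⟨m₁, fm₁, dm₁, π₁, A₁, E₁, B₁, Ft₁, C₁, D₁, h₁⟩ := h₁
  obtain ⟨m₂, fm₂, dm₂, π₂, A₂, E₂, B₂, Ft₂, C₂, D₂, h₂⟩ := h₂
  refine ⟨m₁ ⊕ m₂, inferInstance, inferInstance, Sum.elim π₁ π₂,
    fromBlocks A₁ (B₁ * C₂) 0 A₂, fromBlocks E₁ (Ft₁ * C₂) 0 E₂,
    fromRows (B₁ * D₂) B₂, fromRows (Ft₁ * D₂) Ft₂,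
    fromCols C₁ (D₁ * C₂), D₁ * D₂, fun δ hδ => ?_⟩
  obtain ⟨G₁, hG₁l, hG₁r, hv₁⟩ := h₁ δ hδ
  obtain ⟨G₂, hG₂l, hG₂r, hv₂⟩ := h₂ δ hδ
  set Δ₁ := Matrix.diagonal (fun x => δ (π₁ x)) with hΔ₁
  set Δ₂ := Matrix.diagonal (fun x => δ (π₂ x)) with hΔ₂
  set W₁ := Δ₁ * B₁ - Ft₁ with hW₁
  set W₂ := Δ₂ * B₂ - Ft₂ with hW₂
  set X₁ := E₁ - Δ₁ * A₁ with hX₁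
  set X₂ := E₂ - Δ₂ * A₂ with hX₂
  have hdiag : Matrix.diagonal (fun x : m₁ ⊕ m₂ => δ (Sum.elim π₁ π₂ x)) =
      fromBlocks Δ₁ 0 0 Δ₂ := by
    rw [hΔ₁, hΔ₂, ← diagonal_sumElim]
    congr 1
    funext x; cases x <;> rfl
  have hX : fromBlocks E₁ (Ft₁ * C₂) 0 E₂ -
      Matrix.diagonal (fun x : m₁ ⊕ m₂ => δ (Sum.elim π₁ π₂ x)) *
        fromBlocks A₁ (B₁ * C₂) 0 A₂ =
      fromBlocks X₁ (-(W₁ * C₂)) 0 X₂ := by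
    rw [hdiag, Matrix.fromBlocks_multiply, fromBlocks_sub]
    refine Matrix.fromBlocks_inj.mpr ⟨?_, ?_, ?_, ?_⟩
    · simp [hX₁]
    · simp only [Matrix.mul_zero, Matrix.zero_mul, add_zero, zero_add]
      rw [hW₁, Matrix.sub_mul, neg_sub, Matrix.mul_assoc]
    · simp
    · simp [hX₂]
  refine ⟨fromBlocks G₁ (G₁ * (W₁ * C₂) * G₂) 0 G₂, ?_, ?_, ?_⟩
  · rw [hX, Matrix.fromBlocks_multiply]
    simp only [Matrix.mul_zero, Matrix.zero_mul, add_zero, zero_add, hG₁l, hG₂l]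
    rw [show X₁ * (G₁ * (W₁ * C₂) * G₂) + -(W₁ * C₂) * G₂ = 0 by
      rw [← Matrix.mul_assoc, ← Matrix.mul_assoc, hG₁l]; simp]
    exact Matrix.fromBlocks_one
  · rw [hX, Matrix.fromBlocks_multiply]
    simp only [Matrix.mul_zero, Matrix.zero_mul, add_zero, zero_add, hG₁r, hG₂r]
    rw [show G₁ * -(W₁ * C₂) + G₁ * (W₁ * C₂) * G₂ * X₂ = 0 by
      rw [Matrix.mul_assoc (G₁ * (W₁ * C₂)) G₂ X₂, hG₂r]; simp]
    exact Matrix.fromBlocks_one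
  · rw [hdiag, Matrix.fromBlocks_mul_fromRows, fromRows_sub,
      Matrix.fromCols_mul_fromBlocks, Matrix.fromCols_mul_fromRows]
    simp only [Matrix.mul_zero, Matrix.zero_mul, add_zero, zero_add]
    rw [hv₁, hv₂]
    have e1 : Δ₁ * (B₁ * D₂) - Ft₁ * D₂ = W₁ * D₂ := by
      rw [hW₁, Matrix.sub_mul, Matrix.mul_assoc]
    rw [e1]
    simp only [Matrix.mul_add, Matrix.add_mul, Matrix.mul_assoc]
    abel

lemma mul_star_of_norm_one {z : ℂ} (h : ‖z‖ = 1) : z * star z = 1 := by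
  rw [Complex.star_def, Complex.mul_conj, Complex.normSq_eq_norm_sq, h]
  norm_num

lemma repOn_conjTranspose {F₁ : (ι → ℂ) → Matrix K K ℂ} (h₁ : RepOn F₁) :
    RepOn (fun δ => (F₁ δ)ᴴ) := by
  obtain ⟨m₁, fm₁, dm₁, π₁, A₁, E₁, B₁, Ft₁, C₁, D₁, h₁⟩ := h₁
  refine ⟨m₁ ⊕ m₁, inferInstance, inferInstance, Sum.elim π₁ π₁,
    fromBlocks 0 0 1 0, fromBlocks (-A₁ᴴ) E₁ᴴ 0 1,
    0, fromRows (-C₁ᴴ) 0,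
    fromCols B₁ᴴ (-Ft₁ᴴ), D₁ᴴ, fun δ hδ => ?_⟩
  obtain ⟨G₁, hG₁l, hG₁r, hv₁⟩ := h₁ δ hδ
  set Δ₁ := Matrix.diagonal (fun x => δ (π₁ x)) with hΔ₁
  set X₁ := E₁ - Δ₁ * A₁ with hX₁
  set Dbar := Δ₁ᴴ with hDbar
  have hΔD : Δ₁ * Dbar = 1 := by
    rw [hDbar, hΔ₁, Matrix.diagonal_conjTranspose, Matrix.diagonal_mul_diagonal,
      ← Matrix.diagonal_one]
    have e : (fun i => δ (π₁ i) * star (δ (π₁ i))) = fun _ : m₁ => (1 : ℂ) :=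
      funext fun x => mul_star_of_norm_one (hδ _)
    exact congrArg Matrix.diagonal e
  have hDΔ : Dbar * Δ₁ = 1 := by
    rw [hDbar, hΔ₁, Matrix.diagonal_conjTranspose, Matrix.diagonal_mul_diagonal,
      ← Matrix.diagonal_one]
    have e : (fun i => star (δ (π₁ i)) * δ (π₁ i)) = fun _ : m₁ => (1 : ℂ) :=
      funext fun x => by rw [mul_comm]; exact mul_star_of_norm_one (hδ _)
    exact congrArg Matrix.diagonal e
  set Km := Dbar * G₁ᴴ with hKm
  have hX₁H : X₁ᴴ = E₁ᴴ - A₁ᴴ * Dbar := by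
    rw [hX₁, Matrix.conjTranspose_sub, Matrix.conjTranspose_mul, hDbar]
  have hYK : (E₁ᴴ * Δ₁ - A₁ᴴ) * Km = 1 := by
    have e : E₁ᴴ * Δ₁ - A₁ᴴ = X₁ᴴ * Δ₁ := by
      rw [hX₁H, Matrix.sub_mul, Matrix.mul_assoc, hDΔ, Matrix.mul_one]
    rw [e, hKm, Matrix.mul_assoc, ← Matrix.mul_assoc Δ₁ Dbar G₁ᴴ, hΔD, Matrix.one_mul,
      ← Matrix.conjTranspose_mul, hG₁r, Matrix.conjTranspose_one]
  have hKY : Km * (E₁ᴴ * Δ₁ - A₁ᴴ) = 1 := by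
    have e : E₁ᴴ * Δ₁ - A₁ᴴ = X₁ᴴ * Δ₁ := by
      rw [hX₁H, Matrix.sub_mul, Matrix.mul_assoc, hDΔ, Matrix.mul_one]
    rw [e, hKm, Matrix.mul_assoc, ← Matrix.mul_assoc G₁ᴴ X₁ᴴ Δ₁,
      ← Matrix.conjTranspose_mul, hG₁l, Matrix.conjTranspose_one, Matrix.one_mul, hDΔ]
  have hYKe : E₁ᴴ * (Δ₁ * Km) - A₁ᴴ * Km = 1 := by
    rw [← Matrix.mul_assoc]
    rw [← Matrix.sub_mul]
    exact hYK
  have hKYe : Km * (E₁ᴴ * Δ₁) - Km * A₁ᴴ = 1 := by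
    rw [← Matrix.mul_sub]
    exact hKY
  have hdiag : Matrix.diagonal (fun x : m₁ ⊕ m₁ => δ (Sum.elim π₁ π₁ x)) =
      fromBlocks Δ₁ 0 0 Δ₁ := by
    rw [hΔ₁, ← diagonal_sumElim]
    congr 1
    funext x; cases x <;> rfl
  have hX : fromBlocks (-A₁ᴴ) E₁ᴴ 0 1 -
      Matrix.diagonal (fun x : m₁ ⊕ m₁ => δ (Sum.elim π₁ π₁ x)) * fromBlocks 0 0 1 0 =
      fromBlocks (-A₁ᴴ) E₁ᴴ (-Δ₁) 1 := by
    rw [hdiag, Matrix.fromBlocks_multiply, fromBlocks_sub]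
    refine Matrix.fromBlocks_inj.mpr ⟨?_, ?_, ?_, ?_⟩ <;> simp
  refine ⟨fromBlocks Km (-(Km * E₁ᴴ)) (Δ₁ * Km) (1 - Δ₁ * (Km * E₁ᴴ)), ?_, ?_, ?_⟩
  · rw [hX, Matrix.fromBlocks_multiply, ← Matrix.fromBlocks_one]
    refine Matrix.fromBlocks_inj.mpr ⟨?_, ?_, ?_, ?_⟩ <;>
      simp only [Matrix.neg_mul, Matrix.mul_neg, Matrix.sub_mul, Matrix.mul_sub,
        Matrix.mul_one, Matrix.one_mul, Matrix.mul_assoc, neg_neg, neg_sub, sub_neg_eq_add]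
    · rw [← hYKe]; abel
    · have e2 : E₁ᴴ * (Δ₁ * (Km * E₁ᴴ)) - A₁ᴴ * (Km * E₁ᴴ) = E₁ᴴ := by
        have h := congrArg (fun Z => Z * E₁ᴴ) hYKe
        simpa [Matrix.sub_mul, Matrix.mul_assoc] using h
      rw [sub_eq_iff_eq_add] at e2
      rw [e2]; abel
    · abel
    · abel
  · rw [hX, Matrix.fromBlocks_multiply, ← Matrix.fromBlocks_one]
    refine Matrix.fromBlocks_inj.mpr ⟨?_, ?_, ?_, ?_⟩ <;>
      simp only [Matrix.neg_mul, Matrix.mul_neg, Matrix.sub_mul, Matrix.mul_sub,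
        Matrix.mul_one, Matrix.one_mul, Matrix.mul_assoc, neg_neg, neg_sub, sub_neg_eq_add]
    · rw [← hKYe]; abel
    · abel
    · have e3 : Δ₁ * (Km * (E₁ᴴ * Δ₁)) - Δ₁ * (Km * A₁ᴴ) = Δ₁ := by
        have h := congrArg (fun Z => Δ₁ * Z) hKYe
        simpa [Matrix.mul_sub, Matrix.mul_one] using h
      rw [sub_eq_iff_eq_add] at e3
      rw [e3]; abel
    · abel
  · rw [hdiag, Matrix.mul_zero, zero_sub, Matrix.fromCols_mul_fromBlocks]
    have hneg : -((-C₁ᴴ).fromRows (0 : Matrix m₁ K ℂ)) = (C₁ᴴ).fromRows (0 : Matrix m₁ K ℂ) := by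
      ext i j; cases i <;> simp [Matrix.fromRows_apply_inl, Matrix.fromRows_apply_inr]
    rw [hneg, Matrix.fromCols_mul_fromRows, Matrix.mul_zero, add_zero]
    show (F₁ δ)ᴴ = _
    rw [hv₁]
    have e4 : Δ₁ * Km = G₁ᴴ := by rw [hKm, ← Matrix.mul_assoc, hΔD, Matrix.one_mul]
    rw [e4, hKm]
    simp only [Matrix.conjTranspose_add, Matrix.conjTranspose_mul,
      Matrix.conjTranspose_sub, hDbar]
    simp only [Matrix.sub_mul, Matrix.add_mul, Matrix.neg_mul, Matrix.mul_assoc]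
    abel

lemma repOn_pow {F₁ : (ι → ℂ) → Matrix K K ℂ} (h₁ : RepOn F₁) (m : ℕ) :
    RepOn (fun δ => (F₁ δ) ^ m) := by
  induction m with
  | zero => simpa [pow_zero] using repOn_const (1 : Matrix K K ℂ)
  | succ m ih =>
    have := repOn_mul ih h₁
    simpa [pow_succ] using this

lemma repOn_sum {s : Finset ℕ} {F : ℕ → (ι → ℂ) → Matrix K K ℂ}
    (h : ∀ m ∈ s, RepOn (F m)) : RepOn (fun δ => ∑ m ∈ s, F m δ) := by
  classical
  induction s using Finset.induction_on with
  | empty => simpa using repOn_const (0 : Matrix K K ℂ)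
  | insert a s hnot ih =>
    have h1 : RepOn (F a) := h a (Finset.mem_insert_self a s)
    have h2 : RepOn (fun δ => ∑ m ∈ s, F m δ) := ih fun m hm => h m (Finset.mem_insert_of_mem hm)
    have := repOn_add h1 h2
    convert this using 2 with δ
    rw [Finset.sum_insert hnot]

lemma repOn_elim {F : (ι → ℂ) → Matrix K K ℂ} (h : RepOn F) :
    ∃ (g : ι → ℕ)
      (A' E' : Matrix ((i : ι) × Fin (g i)) ((i : ι) × Fin (g i)) ℂ)
      (B' F' : Matrix ((i : ι) × Fin (g i)) K ℂ)
      (C' : Matrix K ((i : ι) × Fin (g i)) ℂ) (D' : Matrix K K ℂ),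
      ∀ δ : ι → ℂ, (∀ i, ‖δ i‖ = 1) →
        ∃ G : Matrix ((i : ι) × Fin (g i)) ((i : ι) × Fin (g i)) ℂ,
          (E' - Matrix.diagonal (fun x : (i : ι) × Fin (g i) => δ x.1) * A') * G = 1 ∧
          G * (E' - Matrix.diagonal (fun x : (i : ι) × Fin (g i) => δ x.1) * A') = 1 ∧
          F δ = D' + C' * G *
            (Matrix.diagonal (fun x : (i : ι) × Fin (g i) => δ x.1) * B' - F') := by
  classical
  obtain ⟨m, fm, dm, π, A', E', B', F', C', D', h⟩ := h
  set g : ι → ℕ := fun i => Fintype.card {x : m // π x = i} with hg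
  set e : ((i : ι) × Fin (g i)) ≃ m :=
    (Equiv.sigmaCongrRight (fun i => (Fintype.equivFin {x : m // π x = i}).symm)).trans
      (Equiv.sigmaFiberEquiv π) with he
  have hcompat : ∀ x : (i : ι) × Fin (g i), π (e x) = x.1 := by
    rintro ⟨i, j⟩
    simp only [he, Equiv.trans_apply, Equiv.sigmaCongrRight_apply]
    exact ((Fintype.equivFin {x : m // π x = i}).symm j).2
  refine ⟨g, A'.submatrix e e, E'.submatrix e e, B'.submatrix e id, F'.submatrix e id,
    C'.submatrix id e, D', fun δ hδ => ?_⟩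
  obtain ⟨G, hGl, hGr, hval⟩ := h δ hδ
  have hdiag : Matrix.diagonal (fun x : (i : ι) × Fin (g i) => δ x.1) =
      (Matrix.diagonal (fun x : m => δ (π x))).submatrix e e := by
    ext a b
    rw [Matrix.submatrix_apply, Matrix.diagonal_apply, Matrix.diagonal_apply]
    by_cases hab : a = b
    · subst hab
      simp [hcompat a]
    · rw [if_neg hab, if_neg (fun hh => hab (e.injective hh))]
  have hXsub : E'.submatrix e e -
      Matrix.diagonal (fun x : (i : ι) × Fin (g i) => δ x.1) * A'.submatrix e e =
      (E' - Matrix.diagonal (fun x : m => δ (π x)) * A').submatrix e e := by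
    rw [hdiag, Matrix.submatrix_mul_equiv, Matrix.submatrix_sub]
    rfl
  refine ⟨G.submatrix e e, ?_, ?_, ?_⟩
  · rw [hXsub, Matrix.submatrix_mul_equiv, hGl, Matrix.submatrix_one_equiv]
  · rw [hXsub, Matrix.submatrix_mul_equiv, hGr, Matrix.submatrix_one_equiv]
  · rw [hdiag, Matrix.submatrix_mul_equiv,
      Matrix.submatrix_mul_equiv (Matrix.diagonal fun x : m => δ (π x)) B' (⇑e) e id]
    have hsub2 : ((Matrix.diagonal (fun x : m => δ (π x)) * B')).submatrix (⇑e) id -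
        F'.submatrix (⇑e) id =
        ((Matrix.diagonal (fun x : m => δ (π x)) * B') - F').submatrix (⇑e) id := by
      rw [Matrix.submatrix_sub]; rfl
    rw [hsub2, Matrix.submatrix_mul_equiv (C' * G) _ id e id, Matrix.submatrix_id_id, hval]

end Rep
end Stmt12Aux

/-- Theorem `th:nDbis`, purely discrete nD Roesser case: the
`n ≥ 2` dimensions are indexed by `Fin (n + 2)` (so `n` here is the number of
dimensions minus two), the distinguished first dimension being index `0`.
The blocks `A i j ∈ ℝ^{k i × k j}` assemble into
`A_M = [A_{ij}]_{i,j ≠ 0}`, `B_M = [A_{i,0}]_{i ≠ 0}`, `C_M = [A_{0,j}]_{j ≠ 0}`,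
`D_M = A_{0,0}`, via the index type `ι = Σ i ≠ 0, Fin (k i)`, and
`Δ̃(δ) = diag(δ_i I_{k i})_{i ≠ 0}`.  If for every `δ` in the torus there is
a Hermitian positive definite `P(δ)` with `M(δ)* P(δ) M(δ) − P(δ) < 0`, then
such a certificate exists in implicit linear fractional representation (ILFR)
form `P^•(δ) = D^• + C^• (E^• − Δ̂(δ) A^•)⁻¹ (Δ̂(δ) B^• − F^•)` with
`Δ̂(δ) = diag(δ_i I_{g i})_{i ≠ 0}`. -/
theorem stmt12 (n : ℕ) (k : Fin (n + 2) → ℕ) (hk : ∀ i, 0 < k i)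
    (A : ∀ i j : Fin (n + 2), Matrix (Fin (k i)) (Fin (k j)) ℝ)
    (M : ({i : Fin (n + 2) // i ≠ 0} → ℂ) → Matrix (Fin (k 0)) (Fin (k 0)) ℂ)
    (hinv : ∀ δ : {i : Fin (n + 2) // i ≠ 0} → ℂ, (∀ i, ‖δ i‖ = 1) →
      IsUnit ((1 : Matrix ((i : {i : Fin (n + 2) // i ≠ 0}) × Fin (k i.1))
          ((i : {i : Fin (n + 2) // i ≠ 0}) × Fin (k i.1)) ℂ) -
        Matrix.diagonal (fun x : (i : {i : Fin (n + 2) // i ≠ 0}) × Fin (k i.1) => δ x.1) *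
          Matrix.of (fun x y : (i : {i : Fin (n + 2) // i ≠ 0}) × Fin (k i.1) =>
            ((A x.1.1 y.1.1).map Complex.ofReal) x.2 y.2)))
    (hM : ∀ δ : {i : Fin (n + 2) // i ≠ 0} → ℂ, (∀ i, ‖δ i‖ = 1) →
      M δ = (A 0 0).map Complex.ofReal +
        Matrix.of (fun (a : Fin (k 0)) (y : (i : {i : Fin (n + 2) // i ≠ 0}) × Fin (k i.1)) =>
            ((A 0 y.1.1).map Complex.ofReal) a y.2) *
          ((1 : Matrix ((i : {i : Fin (n + 2) // i ≠ 0}) × Fin (k i.1))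
              ((i : {i : Fin (n + 2) // i ≠ 0}) × Fin (k i.1)) ℂ) -
            Matrix.diagonal (fun x : (i : {i : Fin (n + 2) // i ≠ 0}) × Fin (k i.1) => δ x.1) *
              Matrix.of (fun x y : (i : {i : Fin (n + 2) // i ≠ 0}) × Fin (k i.1) =>
                ((A x.1.1 y.1.1).map Complex.ofReal) x.2 y.2))⁻¹ *
          (Matrix.diagonal (fun x : (i : {i : Fin (n + 2) // i ≠ 0}) × Fin (k i.1) => δ x.1) *
            Matrix.of (fun (x : (i : {i : Fin (n + 2) // i ≠ 0}) × Fin (k i.1)) (b : Fin (k 0)) =>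
              ((A x.1.1 0).map Complex.ofReal) x.2 b)))
    (hP : ∀ δ : {i : Fin (n + 2) // i ≠ 0} → ℂ, (∀ i, ‖δ i‖ = 1) →
      ∃ P : Matrix (Fin (k 0)) (Fin (k 0)) ℂ,
        P.PosDef ∧ (-((M δ)ᴴ * P * M δ - P)).PosDef) :
    ∃ g : {i : Fin (n + 2) // i ≠ 0} → ℕ,
    ∃ A' E' : Matrix ((i : {i : Fin (n + 2) // i ≠ 0}) × Fin (g i))
        ((i : {i : Fin (n + 2) // i ≠ 0}) × Fin (g i)) ℂ,
    ∃ B' F' : Matrix ((i : {i : Fin (n + 2) // i ≠ 0}) × Fin (g i)) (Fin (k 0)) ℂ,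
    ∃ C' : Matrix (Fin (k 0)) ((i : {i : Fin (n + 2) // i ≠ 0}) × Fin (g i)) ℂ,
    ∃ D' : Matrix (Fin (k 0)) (Fin (k 0)) ℂ,
      ∀ δ : {i : Fin (n + 2) // i ≠ 0} → ℂ, (∀ i, ‖δ i‖ = 1) →
        IsUnit (E' -
          Matrix.diagonal (fun x : (i : {i : Fin (n + 2) // i ≠ 0}) × Fin (g i) => δ x.1) * A') ∧
        (D' + C' * (E' -
            Matrix.diagonal (fun x : (i : {i : Fin (n + 2) // i ≠ 0}) × Fin (g i) => δ x.1) * A')⁻¹ *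
          (Matrix.diagonal (fun x : (i : {i : Fin (n + 2) // i ≠ 0}) × Fin (g i) => δ x.1) * B' -
            F')).PosDef ∧
        (-((M δ)ᴴ *
            (D' + C' * (E' -
                Matrix.diagonal
                  (fun x : (i : {i : Fin (n + 2) // i ≠ 0}) × Fin (g i) => δ x.1) * A')⁻¹ *
              (Matrix.diagonal
                  (fun x : (i : {i : Fin (n + 2) // i ≠ 0}) × Fin (g i) => δ x.1) * B' - F')) *
            M δ -
            (D' + C' * (E' -
                Matrix.diagonal
                  (fun x : (i : {i : Fin (n + 2) // i ≠ 0}) × Fin (g i) => δ x.1) * A')⁻¹ *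
              (Matrix.diagonal
                  (fun x : (i : {i : Fin (n + 2) // i ≠ 0}) × Fin (g i) => δ x.1) * B' -
                F')))).PosDef := by
  classical
  have hKne : Nonempty (Fin (k 0)) := ⟨⟨0, hk 0⟩⟩
  -- name the four block matrices
  set Amat : Matrix ((i : {i : Fin (n + 2) // i ≠ 0}) × Fin (k i.1)) ((i : {i : Fin (n + 2) // i ≠ 0}) × Fin (k i.1)) ℂ :=
    Matrix.of (fun x y : (i : {i : Fin (n + 2) // i ≠ 0}) × Fin (k i.1) =>
      ((A x.1.1 y.1.1).map Complex.ofReal) x.2 y.2) with hAmat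
  set Bmat : Matrix ((i : {i : Fin (n + 2) // i ≠ 0}) × Fin (k i.1)) (Fin (k 0)) ℂ :=
    Matrix.of (fun (x : (i : {i : Fin (n + 2) // i ≠ 0}) × Fin (k i.1)) (b : Fin (k 0)) =>
      ((A x.1.1 0).map Complex.ofReal) x.2 b) with hBmat
  set Cmat : Matrix (Fin (k 0)) ((i : {i : Fin (n + 2) // i ≠ 0}) × Fin (k i.1)) ℂ :=
    Matrix.of (fun (a : Fin (k 0)) (y : (i : {i : Fin (n + 2) // i ≠ 0}) × Fin (k i.1)) =>
      ((A 0 y.1.1).map Complex.ofReal) a y.2) with hCmat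
  set Dmat : Matrix (Fin (k 0)) (Fin (k 0)) ℂ := (A 0 0).map Complex.ofReal with hDmat
  set X : ({i : Fin (n + 2) // i ≠ 0} → ℂ) → Matrix ((i : {i : Fin (n + 2) // i ≠ 0}) × Fin (k i.1)) ((i : {i : Fin (n + 2) // i ≠ 0}) × Fin (k i.1)) ℂ :=
    fun δ => 1 - Matrix.diagonal (fun x : (i : {i : Fin (n + 2) // i ≠ 0}) × Fin (k i.1) => δ x.1) * Amat with hX
  -- representability of M on the torus
  have hRepM : Stmt12Aux.RepOn M := by
    refine ⟨(i : {i : Fin (n + 2) // i ≠ 0}) × Fin (k i.1), inferInstance, inferInstance, Sigma.fst,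
      Amat, 1, Bmat, 0, Cmat, Dmat, fun δ hδ => ?_⟩
    obtain ⟨u, hu⟩ := hinv δ hδ
    have hXu : (1 : Matrix ((i : {i : Fin (n + 2) // i ≠ 0}) × Fin (k i.1)) ((i : {i : Fin (n + 2) // i ≠ 0}) × Fin (k i.1)) ℂ) -
        Matrix.diagonal (fun x : (i : {i : Fin (n + 2) // i ≠ 0}) × Fin (k i.1) => δ (Sigma.fst x)) * Amat = ↑u := hu.symm
    refine ⟨↑u⁻¹, ?_, ?_, ?_⟩
    · rw [hXu]; exact u.mul_inv
    · rw [hXu]; exact u.inv_mul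
    · have hXinv : ((1 : Matrix ((i : {i : Fin (n + 2) // i ≠ 0}) × Fin (k i.1)) ((i : {i : Fin (n + 2) // i ≠ 0}) × Fin (k i.1)) ℂ) -
          Matrix.diagonal (fun x : (i : {i : Fin (n + 2) // i ≠ 0}) × Fin (k i.1) => δ (Sigma.fst x)) * Amat)⁻¹ =
          ↑u⁻¹ :=
        Matrix.inv_eq_right_inv (by rw [hXu]; exact u.mul_inv)
      rw [sub_zero, ← hXinv]
      exact hM δ hδ
  -- the continuous surrogate for M
  set Mc : ({i : Fin (n + 2) // i ≠ 0} → ℂ) → Matrix (Fin (k 0)) (Fin (k 0)) ℂ := fun δ =>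
    Dmat + Ring.inverse (X δ).det •
      (Cmat * (X δ).adjugate *
        (Matrix.diagonal (fun x : (i : {i : Fin (n + 2) // i ≠ 0}) × Fin (k i.1) => δ x.1) * Bmat)) with hMc
  have hMceq : ∀ δ : {i : Fin (n + 2) // i ≠ 0} → ℂ, (∀ i, ‖δ i‖ = 1) → M δ = Mc δ := by
    intro δ hδ
    rw [hM δ hδ, hMc]
    rw [Matrix.inv_def (X δ), Matrix.mul_smul, Matrix.smul_mul]
  have hcontΔ : Continuous fun δ : {i : Fin (n + 2) // i ≠ 0} → ℂ =>
      Matrix.diagonal (fun x : (i : {i : Fin (n + 2) // i ≠ 0}) × Fin (k i.1) => δ x.1) :=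
    Continuous.matrix_diagonal (continuous_pi fun x => continuous_apply x.1)
  have hcontX : Continuous X := continuous_const.sub (hcontΔ.matrix_mul continuous_const)
  set W : Set ({i : Fin (n + 2) // i ≠ 0} → ℂ) := (fun δ => (X δ).det) ⁻¹' {(0 : ℂ)}ᶜ with hW
  have hWopen : IsOpen W := isOpen_compl_singleton.preimage hcontX.matrix_det
  have hSW : {δ : {i : Fin (n + 2) // i ≠ 0} → ℂ | ∀ i, ‖δ i‖ = 1} ⊆ W := by
    intro δ hδ
    have h1 : IsUnit (X δ) := hinv δ hδ
    have h2 : IsUnit (X δ).det := (Matrix.isUnit_iff_isUnit_det _).1 h1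
    simpa [hW] using h2.ne_zero
  have hMccont : ContinuousOn Mc W := by
    have hr : ContinuousOn (fun δ => Ring.inverse (X δ).det) W := by
      have he : (fun δ => Ring.inverse (X δ).det) = fun δ => ((X δ).det)⁻¹ := by
        funext δ; rw [Ring.inverse_eq_inv']
      rw [he]
      exact ContinuousOn.inv₀ hcontX.matrix_det.continuousOn fun δ hδ => hδ
    exact continuousOn_const.add (hr.smul
      ((continuous_const.matrix_mul hcontX.matrix_adjugate).matrix_mul
        (hcontΔ.matrix_mul continuous_const)).continuousOn)
  have hsmall : ∀ δ ∈ {δ : {i : Fin (n + 2) // i ≠ 0} → ℂ | ∀ i, ‖δ i‖ = 1},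
      ∃ m : ℕ, 1 ≤ m ∧ Stmt12Aux.fsq (Mc δ ^ m) < 1 / 2 := by
    intro δ hδ
    obtain ⟨P, hP1, hP2⟩ := hP δ hδ
    rw [hMceq δ hδ] at hP2
    exact Stmt12Aux.pow_small (Mc δ) P hP1 hP2
  obtain ⟨T, hT1, hT2⟩ := Stmt12Aux.exists_T Mc W hWopen hSW hMccont hsmall
  -- representability of the certificate
  have hRepP : Stmt12Aux.RepOn
      (fun δ => ∑ m ∈ Finset.range T, ((M δ) ^ m)ᴴ * (M δ) ^ m) :=
    Stmt12Aux.repOn_sum fun m _ =>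
      Stmt12Aux.repOn_mul
        (Stmt12Aux.repOn_conjTranspose (Stmt12Aux.repOn_pow hRepM m))
        (Stmt12Aux.repOn_pow hRepM m)
  obtain ⟨g, A', E', B', F', C', D', hrep⟩ := Stmt12Aux.repOn_elim hRepP
  refine ⟨g, A', E', B', F', C', D', fun δ hδ => ?_⟩
  obtain ⟨G, hGl, hGr, hval⟩ := hrep δ hδ
  have hval' : (∑ m ∈ Finset.range T, ((M δ) ^ m)ᴴ * (M δ) ^ m) =
      D' + C' * G *
        (Matrix.diagonal (fun x : (i : {i : Fin (n + 2) // i ≠ 0}) × Fin (g i) => δ x.1) * B' - F') := hval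
  have hIsUnit : IsUnit (E' -
      Matrix.diagonal (fun x : (i : {i : Fin (n + 2) // i ≠ 0}) × Fin (g i) => δ x.1) * A') :=
    ⟨⟨_, G, hGl, hGr⟩, rfl⟩
  have hinveq : (E' - Matrix.diagonal (fun x : (i : {i : Fin (n + 2) // i ≠ 0}) × Fin (g i) => δ x.1) * A')⁻¹ = G :=
    Matrix.inv_eq_right_inv hGl
  have hPval : D' + C' *
      (E' - Matrix.diagonal (fun x : (i : {i : Fin (n + 2) // i ≠ 0}) × Fin (g i) => δ x.1) * A')⁻¹ *
      (Matrix.diagonal (fun x : (i : {i : Fin (n + 2) // i ≠ 0}) × Fin (g i) => δ x.1) * B' - F') =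
      ∑ m ∈ Finset.range T, ((M δ) ^ m)ᴴ * (M δ) ^ m := by
    rw [hinveq, hval']
  rw [hPval]
  -- positive definiteness of the certificate
  have hPsumPD : (∑ m ∈ Finset.range T, ((M δ) ^ m)ᴴ * (M δ) ^ m).PosDef := by
    obtain ⟨T0, rfl⟩ : ∃ T0, T = T0 + 1 := ⟨T - 1, by omega⟩
    have e := Finset.sum_range_succ' (fun m => ((M δ) ^ m)ᴴ * (M δ) ^ m) T0
    simp only [pow_zero, Matrix.conjTranspose_one, Matrix.one_mul] at e
    rw [e, add_comm _ (1 : Matrix (Fin (k 0)) (Fin (k 0)) ℂ)]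
    refine Matrix.PosDef.add_posSemidef Matrix.PosDef.one ?_
    exact Finset.sum_induction _ _ (fun a b ha hb => ha.add hb) Matrix.PosSemidef.zero
      (fun i _ => Matrix.posSemidef_conjTranspose_mul_self _)
  refine ⟨hIsUnit, hPsumPD, ?_⟩
  -- the Lyapunov difference telescopes
  have hterm : ∀ m : ℕ, (M δ)ᴴ * (((M δ) ^ m)ᴴ * (M δ) ^ m) * (M δ) =
      ((M δ) ^ (m + 1))ᴴ * (M δ) ^ (m + 1) := by
    intro m
    rw [pow_succ, Matrix.conjTranspose_mul]
    simp only [Matrix.mul_assoc]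
  have htel : (M δ)ᴴ * (∑ m ∈ Finset.range T, ((M δ) ^ m)ᴴ * (M δ) ^ m) * (M δ) -
      (∑ m ∈ Finset.range T, ((M δ) ^ m)ᴴ * (M δ) ^ m) =
      ((M δ) ^ T)ᴴ * (M δ) ^ T - 1 := by
    have h1 : (M δ)ᴴ * (∑ m ∈ Finset.range T, ((M δ) ^ m)ᴴ * (M δ) ^ m) * (M δ) =
        ∑ m ∈ Finset.range T, ((M δ) ^ (m + 1))ᴴ * (M δ) ^ (m + 1) := by
      rw [Matrix.mul_sum, Matrix.sum_mul]
      exact Finset.sum_congr rfl fun m _ => hterm m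
    rw [h1]
    have e1 := Finset.sum_range_succ' (fun m => ((M δ) ^ m)ᴴ * (M δ) ^ m) T
    have e2 := Finset.sum_range_succ (fun m => ((M δ) ^ m)ᴴ * (M δ) ^ m) T
    simp only [pow_zero, Matrix.conjTranspose_one, Matrix.one_mul] at e1 e2
    have hkey : (∑ m ∈ Finset.range T, ((M δ) ^ (m + 1))ᴴ * (M δ) ^ (m + 1)) + 1 =
        (∑ m ∈ Finset.range T, ((M δ) ^ m)ᴴ * (M δ) ^ m) + ((M δ) ^ T)ᴴ * (M δ) ^ T := by
      rw [← e1, e2]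
    rw [sub_eq_sub_iff_add_eq_add, hkey]
    exact add_comm _ _
  rw [htel, neg_sub]
  -- 1 - NᴴN is positive definite since fsq N < 1
  set N := (M δ) ^ T with hN
  have hfsqN : Stmt12Aux.fsq N < 1 := by
    rw [hN, hMceq δ hδ]
    exact hT2 δ hδ
  refine Matrix.PosDef.of_dotProduct_mulVec_pos ?_ ?_
  · exact Matrix.isHermitian_one.sub (Matrix.posSemidef_conjTranspose_mul_self N).1
  · intro x hx
    have h1 : Stmt12Aux.vsq (N *ᵥ x) ≤ Stmt12Aux.fsq N * Stmt12Aux.vsq x :=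
      Stmt12Aux.vsq_mulVec_le _ _
    have h2 : Stmt12Aux.vsq (N *ᵥ x) < Stmt12Aux.vsq x := by
      have := Stmt12Aux.vsq_pos hx
      nlinarith
    have hdot : star x ⬝ᵥ ((Nᴴ * N) *ᵥ x) = ((Stmt12Aux.vsq (N *ᵥ x) : ℝ) : ℂ) := by
      rw [← Matrix.mulVec_mulVec, Matrix.dotProduct_mulVec, ← Matrix.star_mulVec,
        Stmt12Aux.dot_star_self]
    rw [Matrix.sub_mulVec, dotProduct_sub, Matrix.one_mulVec, Stmt12Aux.dot_star_self,
      hdot, ← Complex.ofReal_sub, Complex.zero_lt_real]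
    linarith
end
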